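/- arXiv:2402.16808 — 5 statements merged into one kernel-verified Lean document; each statement's English description precedes it below -/
import Mathlib

section
/- Let F be an infinite field of characteristic not 2, K/F a quadratic étale algebra, E an étale F-algebra of degree n, K_E = K ⊗_F E, λ ∈ E×, V a nondegenerate hermitian K-space, and r₁, r₂ : V_{E,λ} → V isomorphisms of hermitian spaces. Define i′_j : K_E → End_K(V) by i′_j(x) = r_j ∘ M_x ∘ r_j⁻¹. If g ∈ GL_K(V) satisfies i′₁(x) = g ∘ i′₂(x) ∘ g⁻¹ for all x in the norm-one group K_E¹, then i′₁(x) = g ∘ i′₂(x) ∘ g⁻¹ for all x ∈ K_E. -/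
open scoped TensorProduct
open Polynomial

/-- The norm map `x ↦ x · conj x` on units of an algebra with involution. -/
def normMap {F A : Type} [Field F] [CommRing A] [Algebra F A]
    (σ : A →ₐ[F] A) : Aˣ →* Aˣ :=
  (MonoidHom.id Aˣ) * (Units.map σ.toRingHom.toMonoidHom)

/-- The norm-one group `A¹ = {x ∈ A× : x · σ x = 1}`. -/
def normOneGroup {F A : Type} [Field F] [CommRing A] [Algebra F A]
    (σ : A →ₐ[F] A) : Subgroup Aˣ :=
  (normMap σ).ker

/-- The involution `σ = conj ⊗ id` on `K_E = K ⊗[F] E`. -/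
noncomputable def tensorConj {F K E : Type} [Field F] [CommRing K] [Algebra F K]
    [CommRing E] [Algebra F E] (conj : K →ₐ[F] K) :
    (K ⊗[F] E) →ₐ[F] (K ⊗[F] E) :=
  Algebra.TensorProduct.map conj (AlgHom.id F E)

/-- The hermitian form `⟨x,y⟩_μ = Tr_{K_E/K}(μ · x · σ(y))` on `K_E`. -/
noncomputable def hermFormOf {F K E : Type} [Field F] [CommRing K] [Algebra F K]
    [CommRing E] [Algebra F E] (conj : K →ₐ[F] K) (μ x y : K ⊗[F] E) : K :=
  Algebra.trace K (K ⊗[F] E) (μ * x * (tensorConj conj y))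

lemma coeff_mem_of_eval_mem {F E : Type} [Field F] [CommRing E] [Algebra F E]
    (U : Submodule F E) :
    ∀ (N : ℕ) (Q : E[X]), Q.natDegree ≤ N → ∀ (T : Set F), T.Infinite →
    (∀ s ∈ T, Q.eval (algebraMap F E s) ∈ U) → ∀ k, Q.coeff k ∈ U := by
  rcases subsingleton_or_nontrivial E with hE | hE
  · intro N Q _ T _ _ k
    have : Q.coeff k = 0 := Subsingleton.elim _ _
    rw [this]; exact U.zero_mem
  intro N
  induction N with
  | zero =>
    intro Q hQ T hT hval k
    obtain ⟨s, hs⟩ := hT.nonempty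
    have hQC : Q = C (Q.coeff 0) := Polynomial.eq_C_of_natDegree_le_zero hQ
    rcases k with _ | k
    · have := hval s hs
      rwa [hQC, eval_C] at this
    · rw [hQC, coeff_C]
      simp
  | succ N ih =>
    intro Q hQ T hT hval k
    obtain ⟨t₀, ht₀⟩ := hT.nonempty
    obtain ⟨Q₁, hQ₁⟩ : (X - C (algebraMap F E t₀)) ∣ (Q - C (Q.eval (algebraMap F E t₀))) :=
      Polynomial.X_sub_C_dvd_sub_C_eval
    have hv0 : Q.eval (algebraMap F E t₀) ∈ U := hval t₀ ht₀
    -- degree bound for Q₁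
    have hdeg : Q₁.natDegree ≤ N := by
      rcases eq_or_ne Q₁ 0 with h0 | h0
      · simp [h0]
      · have hmul : ((X - C (algebraMap F E t₀)) * Q₁).natDegree = 1 + Q₁.natDegree := by
          rw [(monic_X_sub_C (algebraMap F E t₀)).natDegree_mul' (by simpa using h0)]
          rw [natDegree_X_sub_C]
        have : ((X - C (algebraMap F E t₀)) * Q₁).natDegree ≤ N + 1 := by
          rw [← hQ₁]
          exact le_trans (Polynomial.natDegree_sub_le _ _) (by simp [hQ])
        omega
    have hval₁ : ∀ s ∈ T \ {t₀}, Q₁.eval (algebraMap F E s) ∈ U := by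
      rintro s ⟨hsT, hs0⟩
      have hne : s - t₀ ≠ 0 := sub_ne_zero.mpr (by simpa using hs0)
      have hev : Q.eval (algebraMap F E s) - Q.eval (algebraMap F E t₀)
          = algebraMap F E (s - t₀) * Q₁.eval (algebraMap F E s) := by
        have := congrArg (Polynomial.eval (algebraMap F E s)) hQ₁
        simpa [map_sub] using this
      have : Q₁.eval (algebraMap F E s)
          = (s - t₀)⁻¹ • (Q.eval (algebraMap F E s) - Q.eval (algebraMap F E t₀)) := by
        rw [hev, ← Algebra.smul_def, smul_smul, inv_mul_cancel₀ hne, one_smul]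
      rw [this]
      exact U.smul_mem _ (U.sub_mem (hval s hsT) hv0)
    have hcoeff₁ : ∀ k, Q₁.coeff k ∈ U :=
      ih Q₁ hdeg (T \ {t₀}) (hT.diff (Set.finite_singleton t₀)) hval₁
    have hQeq : Q = C (Q.eval (algebraMap F E t₀)) + (X - C (algebraMap F E t₀)) * Q₁ := by
      rw [← hQ₁]; ring
    rcases k with _ | k
    · rw [hQeq]
      simp only [coeff_add, coeff_C_zero, sub_mul, coeff_sub, coeff_C_mul]
      rw [Polynomial.coeff_X_mul_zero]
      have : algebraMap F E t₀ * Q₁.coeff 0 = t₀ • Q₁.coeff 0 := (Algebra.smul_def _ _).symm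
      rw [this]
      exact U.add_mem hv0 (U.sub_mem (U.zero_mem) (U.smul_mem _ (hcoeff₁ 0)))
    · rw [hQeq]
      simp only [coeff_add, sub_mul, coeff_sub, coeff_C_mul, coeff_X_mul,
        Polynomial.coeff_C, Nat.succ_ne_zero, if_neg (Nat.succ_ne_zero k)]
      have : algebraMap F E t₀ * Q₁.coeff (k+1) = t₀ • Q₁.coeff (k+1) := (Algebra.smul_def _ _).symm
      rw [this, if_neg (by simp), zero_add]
      exact U.sub_mem (hcoeff₁ k) (U.smul_mem _ (hcoeff₁ (k+1)))

lemma key_identity {F E : Type} [Field F] [CommRing E] [Algebra F E] (w : E)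
    (χ : Polynomial F) (hχ : Polynomial.aeval w χ = 0) (t : F) :
    (1 - algebraMap F E t * w) *
      (∑ k ∈ Finset.range (χ.natDegree + 1), algebraMap F E (χ.coeff k) *
        ((∑ j ∈ Finset.range k, (algebraMap F E t * w) ^ j) *
          (algebraMap F E t) ^ (χ.natDegree - k)))
    = algebraMap F E
        (∑ k ∈ Finset.range (χ.natDegree + 1), χ.coeff k * t ^ (χ.natDegree - k)) := by
  set τ := algebraMap F E t with hτ
  have hgeom : ∀ (x : E) (k : ℕ), (1 - x) * (∑ j ∈ Finset.range k, x ^ j) = 1 - x ^ k := by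
    intro x k
    have h := geom_sum_mul x k
    linear_combination -h
  have haeval : ∑ k ∈ Finset.range (χ.natDegree + 1),
      algebraMap F E (χ.coeff k) * w ^ k = 0 := by
    have h := Polynomial.aeval_eq_sum_range (R := F) (p := χ) w
    rw [hχ] at h
    have : ∀ k ∈ Finset.range (χ.natDegree + 1),
        algebraMap F E (χ.coeff k) * w ^ k = χ.coeff k • w ^ k := by
      intro k _; rw [Algebra.smul_def]
    rw [Finset.sum_congr rfl this, ← h]
  calc (1 - τ * w) *
      (∑ k ∈ Finset.range (χ.natDegree + 1), algebraMap F E (χ.coeff k) *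
        ((∑ j ∈ Finset.range k, (τ * w) ^ j) * τ ^ (χ.natDegree - k)))
      = ∑ k ∈ Finset.range (χ.natDegree + 1), algebraMap F E (χ.coeff k) *
          ((1 - (τ * w) ^ k) * τ ^ (χ.natDegree - k)) := by
        rw [Finset.mul_sum]
        refine Finset.sum_congr rfl fun k _ => ?_
        rw [show (1 - τ * w) * (algebraMap F E (χ.coeff k) *
            ((∑ j ∈ Finset.range k, (τ * w) ^ j) * τ ^ (χ.natDegree - k)))
          = algebraMap F E (χ.coeff k) *
            (((1 - τ * w) * (∑ j ∈ Finset.range k, (τ * w) ^ j)) * τ ^ (χ.natDegree - k))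
          from by ring, hgeom]
    _ = (∑ k ∈ Finset.range (χ.natDegree + 1),
          algebraMap F E (χ.coeff k) * τ ^ (χ.natDegree - k))
        - ∑ k ∈ Finset.range (χ.natDegree + 1),
            algebraMap F E (χ.coeff k) * w ^ k * τ ^ χ.natDegree := by
        rw [← Finset.sum_sub_distrib]
        refine Finset.sum_congr rfl fun k hk => ?_
        have hk' : k ≤ χ.natDegree := Nat.lt_succ_iff.mp (Finset.mem_range.mp hk)
        have : (τ * w) ^ k * τ ^ (χ.natDegree - k) = w ^ k * τ ^ χ.natDegree := by
          rw [mul_pow, mul_assoc, mul_comm (τ ^ k), mul_assoc, ← pow_add,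
            Nat.sub_add_cancel hk', mul_comm (w ^ k)]
        linear_combination (-(algebraMap F E (χ.coeff k))) * this
    _ = algebraMap F E
        (∑ k ∈ Finset.range (χ.natDegree + 1), χ.coeff k * t ^ (χ.natDegree - k)) := by
        rw [show (∑ k ∈ Finset.range (χ.natDegree + 1),
            algebraMap F E (χ.coeff k) * w ^ k * τ ^ χ.natDegree)
          = (∑ k ∈ Finset.range (χ.natDegree + 1),
            algebraMap F E (χ.coeff k) * w ^ k) * τ ^ χ.natDegree
          from (Finset.sum_mul _ _ _).symm, haeval, zero_mul, sub_zero, map_sum]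
        refine Finset.sum_congr rfl fun k _ => ?_
        rw [map_mul, map_pow]

set_option maxHeartbeats 2000000 in
/-- If `r₁, r₂ : V_{E,λ} → V` are isomorphisms of hermitian
spaces, `i′_j(x) = r_j ∘ M_x ∘ r_j⁻¹`, and `g ∈ GL_K(V)` conjugates `i′₂` to
`i′₁` on the norm-one group `K_E¹`, then it does so on all of `K_E`. -/
theorem stmt13 (F K E V : Type) [Field F] [Infinite F] [CommRing K] [Algebra F K]
    [CommRing E] [Algebra F E] [AddCommGroup V] [Module K V] (n : ℕ)
    (hchar : (2 : F) ≠ 0)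
    (hK2 : Module.finrank F K = 2)
    (hKet : ∀ x : K, x ≠ 0 → ∃ y : K, Algebra.trace F K (x * y) ≠ 0)
    (conj : K →ₐ[F] K)
    (hconj : ∀ x, conj (conj x) = x)
    (hfix : ∀ x : K, conj x = x ↔ ∃ a : F, algebraMap F K a = x)
    [Module.Finite F E] (hEn : Module.finrank F E = n)
    (hEet : ∀ x : E, x ≠ 0 → ∃ y : E, Algebra.trace F E (x * y) ≠ 0)
    (B : V → V → K)
    (hherm : ∀ x y, B x y = conj (B y x))
    (haddl : ∀ x x' y, B (x + x') y = B x y + B x' y)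
    (hsmull : ∀ (a : K) (x y : V), B (a • x) y = a * B x y)
    (hnd : ∀ x : V, x ≠ 0 → ∃ y, B x y ≠ 0)
    (lam : Eˣ)
    (r₁ r₂ : (K ⊗[F] E) ≃ₗ[K] V)
    (hr₁ : ∀ x y : K ⊗[F] E,
      B (r₁ x) (r₁ y) = hermFormOf conj (Algebra.TensorProduct.includeRight (lam : E)) x y)
    (hr₂ : ∀ x y : K ⊗[F] E,
      B (r₂ x) (r₂ y) = hermFormOf conj (Algebra.TensorProduct.includeRight (lam : E)) x y)
    (g : V ≃ₗ[K] V)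
    (hyp : ∀ x : (K ⊗[F] E)ˣ, x ∈ normOneGroup (tensorConj conj) →
      r₁.toLinearMap ∘ₗ (Algebra.lmul K (K ⊗[F] E) (x : K ⊗[F] E)) ∘ₗ r₁.symm.toLinearMap
        = g.toLinearMap
            ∘ₗ (r₂.toLinearMap ∘ₗ (Algebra.lmul K (K ⊗[F] E) (x : K ⊗[F] E))
                  ∘ₗ r₂.symm.toLinearMap)
            ∘ₗ g.symm.toLinearMap) :
    ∀ x : K ⊗[F] E,
      r₁.toLinearMap ∘ₗ (Algebra.lmul K (K ⊗[F] E) x) ∘ₗ r₁.symm.toLinearMap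
        = g.toLinearMap
            ∘ₗ (r₂.toLinearMap ∘ₗ (Algebra.lmul K (K ⊗[F] E) x) ∘ₗ r₂.symm.toLinearMap)
            ∘ₗ g.symm.toLinearMap := by
  classical
  -- trivial case : E is the zero ring
  rcases subsingleton_or_nontrivial E with hE | hE
  · have h10 : (0 : K ⊗[F] E) = 1 := by
      rw [Algebra.TensorProduct.one_def, Subsingleton.elim (1 : E) 0,
        TensorProduct.tmul_zero]
    haveI : Subsingleton (K ⊗[F] E) := subsingleton_of_zero_eq_one h10
    haveI : Subsingleton V := r₁.toEquiv.symm.subsingleton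
    intro x
    apply LinearMap.ext
    intro v
    exact Subsingleton.elim _ _
  -- the commutation predicate and the submodule S
  set P : K ⊗[F] E → Prop :=
    fun x => ∀ y : K ⊗[F] E, r₁ (x * (r₁.symm (g (r₂ y)))) = g (r₂ (x * y)) with hP
  have hiff : ∀ x : K ⊗[F] E,
      (r₁.toLinearMap ∘ₗ (Algebra.lmul K (K ⊗[F] E) x) ∘ₗ r₁.symm.toLinearMap
        = g.toLinearMap
            ∘ₗ (r₂.toLinearMap ∘ₗ (Algebra.lmul K (K ⊗[F] E) x) ∘ₗ r₂.symm.toLinearMap)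
            ∘ₗ g.symm.toLinearMap) ↔ P x := by
    intro x
    constructor
    · intro h y
      have hv := LinearMap.ext_iff.mp h (g (r₂ y))
      simp only [LinearMap.comp_apply, LinearEquiv.coe_coe, Algebra.coe_lmul_eq_mul,
        LinearMap.mul_apply', LinearEquiv.symm_apply_apply] at hv
      exact hv
    · intro h
      apply LinearMap.ext
      intro v
      simp only [LinearMap.comp_apply, LinearEquiv.coe_coe, Algebra.coe_lmul_eq_mul,
        LinearMap.mul_apply']
      have hv := h (r₂.symm (g.symm v))
      rw [LinearEquiv.apply_symm_apply, LinearEquiv.apply_symm_apply] at hv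
      exact hv
  set S : Submodule K (K ⊗[F] E) :=
    { carrier := {x | P x}
      add_mem' := by
        intro x₁ x₂ h₁ h₂ y
        simp only [add_mul, map_add]
        rw [h₁ y, h₂ y]
      zero_mem' := by intro y; simp
      smul_mem' := by
        intro k x hx y
        simp only [smul_mul_assoc, map_smul]
        rw [hx y] } with hS
  have hSmem : ∀ x : K ⊗[F] E, x ∈ S ↔ P x := fun _ => Iff.rfl
  have hSmul : ∀ {x₁ x₂ : K ⊗[F] E}, x₁ ∈ S → x₂ ∈ S → x₁ * x₂ ∈ S := by
    intro x₁ x₂ h₁ h₂ y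
    have e1 := h₂ y
    have e2 := h₁ (x₂ * y)
    calc r₁ (x₁ * x₂ * r₁.symm (g (r₂ y)))
        = r₁ (x₁ * r₁.symm (r₁ (x₂ * r₁.symm (g (r₂ y))))) := by
          rw [r₁.symm_apply_apply, mul_assoc]
      _ = r₁ (x₁ * r₁.symm (g (r₂ (x₂ * y)))) := by rw [e1]
      _ = g (r₂ (x₁ * (x₂ * y))) := e2
      _ = g (r₂ (x₁ * x₂ * y)) := by rw [mul_assoc]
  have hSnorm : ∀ x : (K ⊗[F] E)ˣ, x ∈ normOneGroup (tensorConj conj) →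
      (x : K ⊗[F] E) ∈ S := fun x hx => (hiff x).mp (hyp x hx)
  -- the skew element δ
  haveI : Nontrivial K := Module.nontrivial_of_finrank_pos (R := F) (by omega)
  haveI : FiniteDimensional F K := Module.finite_of_finrank_pos (by omega)
  obtain ⟨x₀, hx₀⟩ : ∃ x₀ : K, conj x₀ ≠ x₀ := by
    by_contra h
    push_neg at h
    have hsurj : Function.Surjective (algebraMap F K) := fun x => (hfix x).mp (h x)
    have hinj : Function.Injective (algebraMap F K) := (algebraMap F K).injective
    have : Module.finrank F K = 1 := by
      rw [← (LinearEquiv.ofBijective (Algebra.linearMap F K)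
        ⟨hinj, hsurj⟩).finrank_eq, Module.finrank_self]
    omega
  set δ : K := x₀ - conj x₀ with hδ
  have hδconj : conj δ = -δ := by rw [hδ, map_sub, hconj]; ring
  have hδ0 : δ ≠ 0 := sub_ne_zero.mpr (Ne.symm hx₀)
  obtain ⟨c, hc⟩ : ∃ c : F, algebraMap F K c = δ * δ := by
    apply (hfix _).mp
    rw [map_mul, hδconj]
    ring
  have hc0 : c ≠ 0 := by
    intro h0
    have hδ2 : δ * δ = 0 := by rw [← hc, h0, map_zero]
    obtain ⟨y, hy⟩ := hKet δ hδ0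
    apply hy
    have hz : (δ * y) * (δ * y) = 0 := by
      rw [show (δ * y) * (δ * y) = (δ * δ) * (y * y) from by ring, hδ2, zero_mul]
    have hnil : IsNilpotent ((Algebra.lmul F K) (δ * y)) :=
      ⟨2, by rw [← map_pow, pow_two, hz, map_zero]⟩
    have := LinearMap.isNilpotent_trace_of_isNilpotent hnil
    rw [Algebra.trace_apply]
    exact this.eq_zero
  -- construction of norm-one elements and basic membership facts
  have hD : ∀ (m : E) (u : Eˣ), (u : E) = 1 - algebraMap F E c * (m * m) →
      (δ ⊗ₜ[F] (m * ↑u⁻¹) : K ⊗[F] E) ∈ S := by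
    intro m u hu
    set cE : E := algebraMap F E c with hcE
    set a : E := (1 + cE * (m * m)) * ↑u⁻¹ with ha
    set b : E := (2 * m) * ↑u⁻¹ with hb
    set Y : K ⊗[F] E := 1 ⊗ₜ a + δ ⊗ₜ b with hY
    set Y' : K ⊗[F] E := 1 ⊗ₜ a - δ ⊗ₜ b with hY'
    have halg : ∀ z : E, ((algebraMap F K c) ⊗ₜ[F] z : K ⊗[F] E) = 1 ⊗ₜ (cE * z) := by
      intro z
      rw [Algebra.algebraMap_eq_smul_one, TensorProduct.smul_tmul, hcE, Algebra.smul_def]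
    have hkey : a * a - cE * (b * b) = 1 := by
      have h1 : a * a - cE * (b * b)
          = ((1 - cE * (m * m)) * ↑u⁻¹) * ((1 - cE * (m * m)) * ↑u⁻¹) := by
        rw [ha, hb]; ring
      rw [h1, ← hu, Units.mul_inv, one_mul]
    have hYY' : Y * Y' = 1 := by
      have expand : Y * Y' = 1 ⊗ₜ[F] (a * a) - (δ * δ) ⊗ₜ[F] (b * b) := by
        rw [hY, hY', add_mul, mul_sub, mul_sub,
          Algebra.TensorProduct.tmul_mul_tmul, Algebra.TensorProduct.tmul_mul_tmul,
          Algebra.TensorProduct.tmul_mul_tmul, Algebra.TensorProduct.tmul_mul_tmul]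
        simp only [one_mul, mul_one]
        rw [show (a * b) = (b * a) from mul_comm a b]
        abel
      rw [expand, ← hc, halg, ← TensorProduct.tmul_sub, hkey,
        Algebra.TensorProduct.one_def]
    have hY'Y : Y' * Y = 1 := by rw [mul_comm]; exact hYY'
    have hσY : tensorConj conj Y = Y' := by
      rw [hY, hY', map_add]
      show (Algebra.TensorProduct.map conj (AlgHom.id F E)) (1 ⊗ₜ a)
        + (Algebra.TensorProduct.map conj (AlgHom.id F E)) (δ ⊗ₜ b) = _
      rw [Algebra.TensorProduct.map_tmul, Algebra.TensorProduct.map_tmul,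
        map_one, hδconj, AlgHom.coe_id, id_eq, id_eq, TensorProduct.neg_tmul]
      abel
    set Yu : (K ⊗[F] E)ˣ := ⟨Y, Y', hYY', hY'Y⟩ with hYu
    have hmem : Yu ∈ normOneGroup (tensorConj conj) := by
      rw [normOneGroup, MonoidHom.mem_ker]
      apply Units.ext
      rw [normMap, MonoidHom.mul_apply, Units.val_mul, MonoidHom.id_apply, Units.coe_map]
      show Y * (tensorConj conj) Y = 1
      rw [hσY]
      exact hYY'
    have hYS : Y ∈ S := hSnorm Yu hmem
    have hY'S : Y' ∈ S := by
      have h1 : Yu⁻¹ ∈ normOneGroup (tensorConj conj) := inv_mem hmem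
      exact hSnorm Yu⁻¹ h1
    have hsub : Y - Y' = δ ⊗ₜ[F] (b + b) := by
      rw [hY, hY', TensorProduct.tmul_add]
      abel
    have h2 : (δ ⊗ₜ[F] (m * ↑u⁻¹) : K ⊗[F] E) = (algebraMap F K (4⁻¹ : F)) • (Y - Y') := by
      rw [hsub, algebraMap_smul, TensorProduct.smul_tmul', TensorProduct.smul_tmul]
      congr 1
      rw [Algebra.smul_def, hb]
      have h4 : algebraMap F E (4⁻¹ : F) * (4 : E) = 1 := by
        have : (4 : E) = algebraMap F E (4 : F) := by
          rw [map_ofNat]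
        rw [this, ← map_mul, inv_mul_cancel₀ (by
          intro h; apply hchar
          have : (4 : F) = 2 * 2 := by norm_num
          rw [this] at h
          rcases mul_eq_zero.mp h with h | h <;> exact h), map_one]
      exact (calc algebraMap F E (4⁻¹ : F) * (2 * m * ↑u⁻¹ + 2 * m * ↑u⁻¹)
          = (algebraMap F E (4⁻¹ : F) * (4 : E)) * (m * ↑u⁻¹) := by ring
        _ = m * ↑u⁻¹ := by rw [h4, one_mul]).symm
    rw [h2]
    exact S.smul_mem _ (S.sub_mem hYS hY'S)
  obtain ⟨s₀, hs₀0, hs₀⟩ : ∃ s₀ : F, s₀ ≠ 0 ∧ 1 - c * s₀ ^ 2 ≠ 0 := by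
    set p : Polynomial F := 1 - Polynomial.C c * Polynomial.X ^ 2 with hp
    have hpne : p ≠ 0 := by
      intro h
      have : p.eval 0 = 1 := by simp [hp]
      rw [h] at this
      simp at this
    have hfin : ({0} ∪ {s : F | p.IsRoot s} : Set F).Finite :=
      (Set.finite_singleton 0).union (Polynomial.finite_setOf_isRoot hpne)
    obtain ⟨s₀, hs₀⟩ := hfin.infinite_compl.nonempty
    rw [Set.mem_compl_iff, Set.mem_union] at hs₀
    push_neg at hs₀
    refine ⟨s₀, by simpa using hs₀.1, ?_⟩
    have := hs₀.2
    simp only [Set.mem_setOf_eq, Polynomial.IsRoot.def, hp] at this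
    simpa using this
  have hδ1 : (δ ⊗ₜ[F] (1 : E) : K ⊗[F] E) ∈ S := by
    set w₀ : Fˣ := Units.mk0 (1 - c * s₀ ^ 2) hs₀ with hw₀
    set u₀ : Eˣ := Units.map (algebraMap F E).toMonoidHom w₀ with hu₀def
    have hu₀ : (u₀ : E) = 1 - algebraMap F E c *
        ((algebraMap F E s₀) * (algebraMap F E s₀)) := by
      rw [hu₀def, Units.coe_map]
      show algebraMap F E (1 - c * s₀ ^ 2) = _
      rw [map_sub, map_one, map_mul, map_pow, sq]
    have hD₀ := hD (algebraMap F E s₀) u₀ hu₀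
    have hval : ((u₀⁻¹ : Eˣ) : E) = algebraMap F E ((1 - c * s₀ ^ 2)⁻¹) := by
      rw [hu₀def, ← MonoidHom.map_inv, Units.coe_map]
      rfl
    have heq : (δ ⊗ₜ[F] (1 : E) : K ⊗[F] E)
        = (algebraMap F K (s₀⁻¹ * (1 - c * s₀ ^ 2)))
          • (δ ⊗ₜ[F] ((algebraMap F E s₀) * ↑u₀⁻¹)) := by
      rw [algebraMap_smul, TensorProduct.smul_tmul', TensorProduct.smul_tmul]
      congr 1
      rw [Algebra.smul_def, hval, ← map_mul, ← map_mul]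
      rw [show s₀⁻¹ * (1 - c * s₀ ^ 2) * (s₀ * (1 - c * s₀ ^ 2)⁻¹) = 1 from by
        rw [mul_mul_mul_comm, inv_mul_cancel₀ hs₀0, mul_inv_cancel₀ hs₀, one_mul]]
      rw [map_one]
    rw [heq]
    exact S.smul_mem _ hD₀
  have hone : ∀ (m : E) (u : Eˣ), (u : E) = 1 - algebraMap F E c * (m * m) →
      ((1 : K) ⊗ₜ[F] (m * ↑u⁻¹) : K ⊗[F] E) ∈ S := by
    intro m u hu
    have hp := hSmul hδ1 (hD m u hu)
    have heq : (δ ⊗ₜ[F] (1 : E) : K ⊗[F] E) * (δ ⊗ₜ[F] (m * ↑u⁻¹))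
        = algebraMap F K c • ((1 : K) ⊗ₜ[F] (m * ↑u⁻¹)) := by
      rw [Algebra.TensorProduct.tmul_mul_tmul, one_mul, ← hc,
        TensorProduct.smul_tmul', smul_eq_mul, mul_one]
    have heq2 : ((1 : K) ⊗ₜ[F] (m * ↑u⁻¹) : K ⊗[F] E)
        = algebraMap F K c⁻¹ • ((δ ⊗ₜ[F] (1 : E)) * (δ ⊗ₜ[F] (m * ↑u⁻¹))) := by
      rw [heq, smul_smul, ← map_mul, inv_mul_cancel₀ hc0, map_one, one_smul]
    rw [heq2]
    exact S.smul_mem _ hp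
  -- the main claim
  have hmain : ∀ e : E, ((1 : K) ⊗ₜ[F] e : K ⊗[F] E) ∈ S := by
    intro e
    set w : E := e * e with hw
    set χ : Polynomial F := LinearMap.charpoly (Algebra.lmul F E w) with hχdef
    have hχ0 : Polynomial.aeval w χ = 0 := by
      have h1 : Polynomial.aeval ((Algebra.lmul F E) w) χ = 0 :=
        LinearMap.aeval_self_charpoly _
      have h2 : Polynomial.aeval ((Algebra.lmul F E) w) χ
          = (Algebra.lmul F E) (Polynomial.aeval w χ) :=
        Polynomial.aeval_algHom_apply (Algebra.lmul F E) w χ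
      apply Algebra.lmul_injective (R := F)
      rw [← h2, h1, map_zero]
    set n' : ℕ := χ.natDegree with hn'
    set ρ : Polynomial F := ∑ k ∈ Finset.range (n' + 1),
      Polynomial.C (χ.coeff k) * (Polynomial.C c * Polynomial.X ^ 2) ^ (n' - k) with hρ
    have hρeval : ∀ s : F, ρ.eval s
        = ∑ k ∈ Finset.range (n' + 1), χ.coeff k * (c * s ^ 2) ^ (n' - k) := by
      intro s
      rw [hρ, Polynomial.eval_finset_sum]
      refine Finset.sum_congr rfl fun k _ => ?_
      simp
    have hρ0 : ρ.eval 0 = 1 := by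
      rw [hρeval]
      rw [Finset.sum_eq_single n']
      · rw [show (c * (0:F) ^ 2) = 0 from by ring, Nat.sub_self, pow_zero, mul_one]
        exact Polynomial.Monic.coeff_natDegree (LinearMap.charpoly_monic _)
      · intro k hk hkne
        have hklt : k < n' := lt_of_le_of_ne (Nat.lt_succ_iff.mp (Finset.mem_range.mp hk)) hkne
        rw [show (c * (0:F) ^ 2) = 0 from by ring, zero_pow (by omega), mul_zero]
      · intro h
        exact absurd (Finset.self_mem_range_succ n') h
    have hρne : ρ ≠ 0 := fun h => by rw [h] at hρ0; simp at hρ0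
    set T : Set F := ({0} ∪ {s : F | ρ.IsRoot s})ᶜ with hT
    have hTinf : T.Infinite :=
      ((Set.finite_singleton 0).union (Polynomial.finite_setOf_isRoot hρne)).infinite_compl
    have hTmem : ∀ s ∈ T, s ≠ 0 ∧ ρ.eval s ≠ 0 := by
      intro s hs
      rw [hT, Set.mem_compl_iff, Set.mem_union] at hs
      push_neg at hs
      exact ⟨by simpa using hs.1, hs.2⟩
    have hkey : ∀ s : F, (1 - algebraMap F E c * algebraMap F E s ^ 2 * w) *
        (∑ k ∈ Finset.range (n' + 1), algebraMap F E (χ.coeff k) *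
        ((∑ j ∈ Finset.range k, (algebraMap F E c * algebraMap F E s ^ 2 * w) ^ j) *
          (algebraMap F E c * algebraMap F E s ^ 2) ^ (n' - k)))
        = algebraMap F E (ρ.eval s) := by
      intro s
      have h := key_identity w χ hχ0 (c * s ^ 2)
      rw [map_mul, map_pow] at h
      rw [hρeval s]
      exact h
    have hunit : ∀ s : F, ρ.eval s ≠ 0 → ∃ u : Eˣ,
        ((u : E) = 1 - algebraMap F E c * algebraMap F E s ^ 2 * w ∧
         (↑u⁻¹ : E) = (ρ.eval s)⁻¹ • (∑ k ∈ Finset.range (n' + 1), algebraMap F E (χ.coeff k) *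
        ((∑ j ∈ Finset.range k, (algebraMap F E c * algebraMap F E s ^ 2 * w) ^ j) *
          (algebraMap F E c * algebraMap F E s ^ 2) ^ (n' - k)))) := by
      intro s hsroot
      have hmul1 : (1 - algebraMap F E c * algebraMap F E s ^ 2 * w) *
          ((ρ.eval s)⁻¹ • (∑ k ∈ Finset.range (n' + 1), algebraMap F E (χ.coeff k) *
        ((∑ j ∈ Finset.range k, (algebraMap F E c * algebraMap F E s ^ 2 * w) ^ j) *
          (algebraMap F E c * algebraMap F E s ^ 2) ^ (n' - k)))) = 1 := by
        rw [mul_smul_comm, hkey s, Algebra.algebraMap_eq_smul_one, smul_smul,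
          inv_mul_cancel₀ hsroot, one_smul]
      exact ⟨⟨_, _, hmul1, by rw [mul_comm] at hmul1; exact hmul1⟩, rfl, rfl⟩
    set U : Submodule F E := (S.restrictScalars F).comap
      ((Algebra.TensorProduct.includeRight : E →ₐ[F] K ⊗[F] E).toLinearMap) with hU
    suffices he : e ∈ U by exact he
    set τp : Polynomial E := Polynomial.C (algebraMap F E c) * Polynomial.X ^ 2 with hτp
    set QQ : Polynomial E := Polynomial.C e * ∑ k ∈ Finset.range (n' + 1),
      Polynomial.C (algebraMap F E (χ.coeff k)) *
        ((∑ j ∈ Finset.range k, (τp * Polynomial.C w) ^ j) * τp ^ (n' - k)) with hQQ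
    have hQQeval : ∀ s : F, QQ.eval (algebraMap F E s)
        = e * (∑ k ∈ Finset.range (n' + 1), algebraMap F E (χ.coeff k) *
        ((∑ j ∈ Finset.range k, (algebraMap F E c * algebraMap F E s ^ 2 * w) ^ j) *
          (algebraMap F E c * algebraMap F E s ^ 2) ^ (n' - k))) := by
      intro s
      rw [hQQ]
      simp only [hτp, Polynomial.eval_mul, Polynomial.eval_C, Polynomial.eval_finset_sum,
        Polynomial.eval_pow, Polynomial.eval_X]
    have hQmem : ∀ s ∈ T, QQ.eval (algebraMap F E s) ∈ U := by
      intro s hs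
      obtain ⟨hs0, hsroot⟩ := hTmem s hs
      obtain ⟨u, hu1, hu2⟩ := hunit s hsroot
      have hm : ((1 : K) ⊗ₜ[F] ((algebraMap F E s * e) * ↑u⁻¹) : K ⊗[F] E) ∈ S := by
        apply hone (algebraMap F E s * e) u
        rw [hu1, hw]
        congr 1
        ring
      have hmU : (algebraMap F E s * e) * (↑u⁻¹ : E) ∈ U := hm
      have heval : QQ.eval (algebraMap F E s)
          = (ρ.eval s * s⁻¹) • ((algebraMap F E s * e) * (↑u⁻¹ : E)) := by
        rw [hQQeval s]
        have hq : (∑ k ∈ Finset.range (n' + 1), algebraMap F E (χ.coeff k) *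
        ((∑ j ∈ Finset.range k, (algebraMap F E c * algebraMap F E s ^ 2 * w) ^ j) *
          (algebraMap F E c * algebraMap F E s ^ 2) ^ (n' - k))) = (ρ.eval s) • (↑u⁻¹ : E) := by
          rw [hu2, smul_smul, mul_inv_cancel₀ hsroot, one_smul]
        rw [hq, Algebra.smul_def, Algebra.smul_def, map_mul]
        have hss : algebraMap F E s⁻¹ * algebraMap F E s = 1 := by
          rw [← map_mul, inv_mul_cancel₀ hs0, map_one]
        linear_combination (-(algebraMap F E (ρ.eval s)) * e * ((↑u⁻¹ : Eˣ) : E)) * hss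
      rw [heval]
      exact U.smul_mem _ hmU
    have hcoe := coeff_mem_of_eval_mem U QQ.natDegree QQ le_rfl T hTinf hQmem 0
    have hc00 : QQ.coeff 0 = e := by
      have h0 : QQ.eval (algebraMap F E (0:F)) = e * (∑ k ∈ Finset.range (n' + 1), algebraMap F E (χ.coeff k) *
        ((∑ j ∈ Finset.range k, (algebraMap F E c * algebraMap F E (0:F) ^ 2 * w) ^ j) *
          (algebraMap F E c * algebraMap F E (0:F) ^ 2) ^ (n' - k))) := hQQeval 0
      have hq1 : (∑ k ∈ Finset.range (n' + 1), algebraMap F E (χ.coeff k) *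
        ((∑ j ∈ Finset.range k, (algebraMap F E c * algebraMap F E (0:F) ^ 2 * w) ^ j) *
          (algebraMap F E c * algebraMap F E (0:F) ^ 2) ^ (n' - k))) = 1 := by
        have hk := hkey 0
        rw [hρ0, map_one] at hk
        rw [show (1 - algebraMap F E c * algebraMap F E (0:F) ^ 2 * w) = 1 from by
          rw [map_zero]; ring] at hk
        rw [one_mul] at hk
        exact hk
      rw [hq1, mul_one, map_zero] at h0
      rw [Polynomial.coeff_zero_eq_eval_zero]
      exact h0
    rw [← hc00]
    exact hcoe
  -- conclusion
  intro x
  rw [hiff x]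
  show x ∈ S
  refine TensorProduct.induction_on x ?_ ?_ ?_
  · exact S.zero_mem
  · intro k e
    have : (k ⊗ₜ[F] e : K ⊗[F] E) = k • ((1 : K) ⊗ₜ[F] e) := by
      rw [TensorProduct.smul_tmul', smul_eq_mul, mul_one]
    rw [this]
    exact S.smul_mem k (hmain e)
  · intro a b ha hb
    exact S.add_mem ha hb
end

section
/- (Uniqueness of conjugating data.) Let r₁ : V_{E,λ} → V and r₂ : V_{E,λ'} → V be isomorphisms of hermitian spaces over K, with λ, λ' ∈ E×. The equality r₁ ∘ M_x ∘ r₁⁻¹ = r₂ ∘ M_x ∘ r₂⁻¹ holds for all x ∈ K_E¹ if and only if there exists y ∈ K_E× with λ = N_{K_E/E}(y)·λ' and r₁ = r₂ ∘ M_y. -/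
open scoped TensorProduct

section AuxLemmas
open Polynomial

lemma auxVanish {F M : Type*} [Field F] [AddCommGroup M] [Module F M] {N : ℕ} (v : ℕ → M)
    {T : Set F} (hT : T.Infinite)
    (h : ∀ s ∈ T, ∑ k ∈ Finset.range N, s ^ k • v k = 0) : ∀ k < N, v k = 0 := by
  intro k hk
  rw [← Module.forall_dual_apply_eq_zero_iff F]
  intro φ
  set q : F[X] := ∑ j ∈ Finset.range N, Polynomial.C (φ (v j)) * Polynomial.X ^ j with hq
  have hroots : ∀ s ∈ T, q.IsRoot s := by
    intro s hs
    have h2 := congrArg φ (h s hs)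
    simp only [map_sum, map_smul, map_zero, smul_eq_mul] at h2
    simp only [q, Polynomial.IsRoot, Polynomial.eval_finset_sum, Polynomial.eval_mul,
      Polynomial.eval_C, Polynomial.eval_pow, Polynomial.eval_X]
    rw [← h2]
    exact Finset.sum_congr rfl fun j _ => mul_comm _ _
  have hq0 : q = 0 := Polynomial.eq_zero_of_infinite_isRoot q (hT.mono hroots)
  have hc : q.coeff k = φ (v k) := by
    simp only [q, Polynomial.finset_sum_coeff, Polynomial.coeff_C_mul, Polynomial.coeff_X_pow]
    rw [Finset.sum_eq_single k]
    · simp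
    · intro j _ hj; simp [Ne.symm hj]
    · intro hkk; exact absurd (Finset.mem_range.2 hk) hkk
  rw [hq0] at hc; simpa using hc.symm

lemma auxMem {F M : Type*} [Field F] [AddCommGroup M] [Module F M] (W : Submodule F M)
    {N : ℕ} (v : ℕ → M) {T : Set F} (hT : T.Infinite)
    (h : ∀ s ∈ T, ∑ k ∈ Finset.range N, s ^ k • v k ∈ W) : ∀ k < N, v k ∈ W := by
  intro k hk
  have h0 := auxVanish (fun k => W.mkQ (v k)) hT (fun s hs => by
    have e1 : ∑ j ∈ Finset.range N, s ^ j • W.mkQ (v j)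
        = W.mkQ (∑ j ∈ Finset.range N, s ^ j • v j) := by
      rw [map_sum]; exact Finset.sum_congr rfl fun j _ => (map_smul _ _ _).symm
    show ∑ j ∈ Finset.range N, s ^ j • W.mkQ (v j) = 0
    rw [e1, Submodule.mkQ_apply, Submodule.Quotient.mk_eq_zero]
    exact h s hs) k hk
  simpa [Submodule.Quotient.mk_eq_zero] using h0


lemma auxCoeffMem {F A : Type*} [Field F] [CommRing A] [Algebra F A]
    (W : Submodule F A) (q : A[X]) {T : Set F} (hT : T.Infinite)
    (h : ∀ s ∈ T, q.eval (algebraMap F A s) ∈ W) : ∀ k, q.coeff k ∈ W := by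
  intro k
  rcases lt_or_ge k (q.natDegree + 1) with hk | hk
  · refine auxMem W (fun j => q.coeff j) hT (fun s hs => ?_) k hk
    have e : q.eval (algebraMap F A s) = ∑ j ∈ Finset.range (q.natDegree + 1),
        s ^ j • q.coeff j := by
      rw [Polynomial.eval_eq_sum_range]
      exact Finset.sum_congr rfl fun j _ => by
        rw [Algebra.smul_def, map_pow, mul_comm]
    rw [← e]; exact h s hs
  · rw [Polynomial.coeff_eq_zero_of_natDegree_lt (by omega)]
    exact W.zero_mem

lemma auxSpanSkew {F A : Type*} [Field F] [Infinite F] [CommRing A] [Algebra F A]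
    [Module.Finite F A] (σ : A →ₐ[F] A) (h2 : (2 : F) ≠ 0)
    (w : A) (hw : σ w = -w) :
    w ∈ Submodule.span F {x : A | x * σ x = 1} := by
  rcases subsingleton_or_nontrivial A with hsub | hnt
  · rw [Subsingleton.elim w 0]; exact (Submodule.span F _).zero_mem
  set S := {x : A | x * σ x = 1} with hS
  set W := Submodule.span F S with hW
  set z := w * w with hz
  have hσz : σ z = z := by rw [hz, map_mul, hw]; ring
  obtain ⟨c, hcm, hcz⟩ := IsIntegral.of_finite F z
  have hcz' : Polynomial.aeval z c = 0 := hcz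
  set n := c.natDegree with hn
  have hn1 : 1 ≤ n := by
    by_contra hcon
    have h0 : n = 0 := by omega
    have : c = 1 := hcm.natDegree_eq_zero.mp h0
    rw [this] at hcz'
    simp at hcz'
  set P : F[X] := ∑ m ∈ Finset.range (n+1), C (c.coeff m) * X ^ (n - m) with hP
  have hP0 : P.coeff 0 = 1 := by
    rw [hP, Polynomial.finset_sum_coeff]
    rw [Finset.sum_eq_single n]
    · simp [hcm.coeff_natDegree]; exact hcm.coeff_natDegree
    · intro m hm hmn
      have hmlt : m < n := by
        have := Finset.mem_range.mp hm; omega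
      have : n - m ≠ 0 := by omega
      simp [Polynomial.coeff_C_mul, Polynomial.coeff_X_pow, Ne.symm this]
    · intro hni
      exact absurd (Finset.mem_range.mpr (by omega)) hni
  set Q : A[X] := ∑ m ∈ Finset.range (n+1), C (algebraMap F A (c.coeff m)) * X ^ (n - m)
      * (∑ i ∈ Finset.range m, (C z * X) ^ i) with hQ
  have hgeom : ∀ (x : A[X]) (m : ℕ),
      (∑ i ∈ Finset.range m, x ^ i) * (1 - x) = 1 - x ^ m := by
    intro x m
    rw [show (1 - x) = -(x - 1) by ring, mul_neg, geom_sum_mul, neg_sub]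
  have hkey : Q * (1 - C z * X) = P.map (algebraMap F A) := by
    rw [hQ, Finset.sum_mul]
    have e1 : ∀ m ∈ Finset.range (n+1),
        C (algebraMap F A (c.coeff m)) * X ^ (n - m)
          * (∑ i ∈ Finset.range m, (C z * X) ^ i) * (1 - C z * X)
        = C (algebraMap F A (c.coeff m)) * X ^ (n - m)
          - C (algebraMap F A (c.coeff m)) * C (z ^ m) * X ^ n := by
      intro m hm
      have hmn : m ≤ n := by have := Finset.mem_range.mp hm; omega
      rw [mul_assoc, hgeom, mul_sub, mul_one]
      congr 1
      calc C (algebraMap F A (c.coeff m)) * X ^ (n - m) * (C z * X) ^ m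
          = C (algebraMap F A (c.coeff m)) * C (z ^ m) * (X ^ (n-m) * X ^ m) := by
            rw [mul_pow, ← Polynomial.C_pow]; ring
        _ = C (algebraMap F A (c.coeff m)) * C (z ^ m) * X ^ n := by
            rw [← pow_add, Nat.sub_add_cancel hmn]
    rw [Finset.sum_congr rfl e1, Finset.sum_sub_distrib]
    have e2 : ∑ m ∈ Finset.range (n+1),
        C (algebraMap F A (c.coeff m)) * C (z ^ m) * X ^ n = 0 := by
      rw [← Finset.sum_mul]
      have : ∑ m ∈ Finset.range (n+1), C (algebraMap F A (c.coeff m)) * C (z ^ m)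
          = C (Polynomial.aeval z c) := by
        rw [Polynomial.aeval_eq_sum_range, map_sum]
        exact Finset.sum_congr rfl fun m _ => by
          rw [← Polynomial.C_mul, Algebra.smul_def]
      rw [this, hcz', map_zero, zero_mul]
    rw [e2, sub_zero, Polynomial.map_sum]
    exact Finset.sum_congr rfl fun m _ => by
      rw [Polynomial.map_mul, Polynomial.map_pow, Polynomial.map_C, Polynomial.map_X]
  have hQ0 : Q.coeff 0 = 1 := by
    have hc := congrArg (fun p : A[X] => p.coeff 0) hkey
    simp only [Polynomial.mul_coeff_zero, Polynomial.coeff_sub, Polynomial.coeff_one_zero,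
      Polynomial.coeff_C_mul, Polynomial.coeff_X_zero, Polynomial.coeff_map] at hc
    rw [hP0, map_one] at hc
    simpa using hc
  set P2 : F[X] := P.comp (X ^ 2) with hP2
  have hP2eval : ∀ t : F, P2.eval t = P.eval (t ^ 2) := by
    intro t; rw [hP2, Polynomial.eval_comp, Polynomial.eval_pow, Polynomial.eval_X]
  have hP2ne : P2 ≠ 0 := by
    intro hcon
    have : P2.eval 0 = 1 := by
      have h00 : ((0:F) ^ 2) = 0 := by norm_num
      rw [hP2eval, h00, ← Polynomial.coeff_zero_eq_eval_zero]
      simpa using hP0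
    rw [hcon] at this; simp at this
  set Tgood : Set F := {t : F | t ≠ 0 ∧ P.eval (t ^ 2) ≠ 0} with hTgood
  have hTinf : Tgood.Infinite := by
    have hfin : ({(0 : F)} ∪ {t : F | P2.IsRoot t}).Finite :=
      (Set.finite_singleton 0).union (Polynomial.finite_setOf_isRoot hP2ne)
    refine hfin.infinite_compl.mono ?_
    intro t ht
    rw [Set.mem_compl_iff, Set.mem_union] at ht
    push_neg at ht
    refine ⟨by simpa using ht.1, ?_⟩
    rw [← hP2eval]; exact ht.2
  set QP : A[X] := (Q * C w).comp (X ^ 2) with hQP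
  have hmain : ∀ t ∈ Tgood, QP.eval (algebraMap F A t) ∈ W := by
    intro t ht
    obtain ⟨ht0, hps⟩ := ht
    set s : F := t ^ 2 with hs
    set ps : F := P.eval s with hps'
    set Qs : A := Q.eval (algebraMap F A s) with hQs
    set nu : A := 1 - z * algebraMap F A s with hnu
    have hnuQ : Qs * nu = algebraMap F A ps := by
      have he := congrArg (Polynomial.eval (algebraMap F A s)) hkey
      simp only [Polynomial.eval_mul, Polynomial.eval_sub, Polynomial.eval_one,
        Polynomial.eval_C, Polynomial.eval_X] at he
      rw [Polynomial.eval_map, Polynomial.eval₂_at_apply] at he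
      exact he
    set inv : A := ps⁻¹ • Qs with hinvdef
    have hinv : nu * inv = 1 := by
      rw [hinvdef, mul_smul_comm, mul_comm nu Qs, hnuQ, Algebra.algebraMap_eq_smul_one,
        smul_smul, inv_mul_cancel₀ hps, one_smul]
    have hσQs : σ Qs = Qs := by
      have hexp : Qs = ∑ m ∈ Finset.range (n+1), algebraMap F A (c.coeff m)
          * (algebraMap F A s) ^ (n - m) * ∑ i ∈ Finset.range m, (z * algebraMap F A s) ^ i := by
        rw [hQs, hQ, Polynomial.eval_finset_sum]
        exact Finset.sum_congr rfl fun m _ => by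
          simp [Polynomial.eval_finset_sum]
      rw [hexp]
      simp [map_sum, map_mul, map_pow, AlgHom.commutes, hσz]
    have hσinv : σ inv = inv := by rw [hinvdef, map_smul, hσQs]
    set u : A := 1 + t • w with hu
    set u' : A := 1 - t • w with hu'
    have hσu : σ u = u' := by
      rw [hu, hu', map_add, map_one, map_smul, hw, smul_neg]; ring
    have hσu' : σ u' = u := by
      rw [hu, hu', map_sub, map_one, map_smul, hw, smul_neg]; ring
    have huu' : u * u' = nu := by
      rw [hu, hu', hnu, Algebra.smul_def, hs, map_pow, hz]; ring
    have hxx : (u ^ 2 * inv) * σ (u ^ 2 * inv) = 1 ∧ (u' ^ 2 * inv) * σ (u' ^ 2 * inv) = 1 := by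
      constructor
      · rw [map_mul, map_pow, hσu, hσinv]
        calc u ^ 2 * inv * (u' ^ 2 * inv) = (u * u') ^ 2 * inv ^ 2 := by ring
          _ = (nu * inv) ^ 2 := by rw [huu']; ring
          _ = 1 := by rw [hinv]; norm_num
      · rw [map_mul, map_pow, hσu', hσinv]
        calc u' ^ 2 * inv * (u ^ 2 * inv) = (u * u') ^ 2 * inv ^ 2 := by ring
          _ = (nu * inv) ^ 2 := by rw [huu']; ring
          _ = 1 := by rw [hinv]; norm_num
    have hxW : u ^ 2 * inv ∈ W := Submodule.subset_span hxx.1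
    have hx'W : u' ^ 2 * inv ∈ W := Submodule.subset_span hxx.2
    have hdiff : u ^ 2 * inv - u' ^ 2 * inv = ((4 : F) * t) • (w * inv) := by
      rw [hu, hu', Algebra.smul_def, Algebra.smul_def, map_mul]
      have h4 : algebraMap F A 4 = 4 := by
        rw [show (4 : F) = ((4 : ℕ) : F) by norm_num, map_natCast]; norm_num
      rw [h4]; ring
    have h4t : (4 : F) * t ≠ 0 := by
      have h4 : (4 : F) ≠ 0 := by
        have : (4 : F) = 2 * 2 := by norm_num
        rw [this]; exact mul_ne_zero h2 h2
      exact mul_ne_zero h4 ht0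
    have hwinv : w * inv ∈ W := by
      have hmem : u ^ 2 * inv - u' ^ 2 * inv ∈ W := W.sub_mem hxW hx'W
      rw [hdiff] at hmem
      have := W.smul_mem (((4 : F) * t)⁻¹) hmem
      rwa [smul_smul, inv_mul_cancel₀ h4t, one_smul] at this
    have hQsw : QP.eval (algebraMap F A t) = ps • (w * inv) := by
      rw [hQP, Polynomial.eval_comp, Polynomial.eval_pow, Polynomial.eval_X,
        ← map_pow, Polynomial.eval_mul, Polynomial.eval_C, ← hs, ← hQs]
      have : Qs = ps • inv := by
        rw [hinvdef, smul_smul, mul_inv_cancel₀ hps, one_smul]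
      rw [this, smul_mul_assoc, mul_comm inv w]
    rw [hQsw]
    exact W.smul_mem ps hwinv
  have hcoeff := auxCoeffMem W QP hTinf hmain 0
  have hQP0 : QP.coeff 0 = w := by
    have h00 : ((0:A) ^ 2) = 0 := by norm_num
    rw [Polynomial.coeff_zero_eq_eval_zero, hQP, Polynomial.eval_comp, Polynomial.eval_pow,
      Polynomial.eval_X, h00, ← Polynomial.coeff_zero_eq_eval_zero, Polynomial.mul_coeff_zero,
      hQ0, Polynomial.coeff_C_zero, one_mul]
  rwa [hQP0] at hcoeff

lemma auxTrace {F K E : Type} [Field F] [CommRing K] [Algebra F K] [CommRing E] [Algebra F E]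
    [Module.Finite F E] (k : K) (x : E) :
    Algebra.trace K (K ⊗[F] E) (k ⊗ₜ x) = k * algebraMap F K (Algebra.trace F E x) := by
  have hbc : (Algebra.lmul K (K ⊗[F] E)) ((1:K) ⊗ₜ x)
      = LinearMap.baseChange K (Algebra.lmul F E x) := by
    apply LinearMap.ext
    intro v
    induction v with
    | zero => simp
    | tmul k' e =>
        simp [LinearMap.baseChange_tmul, Algebra.TensorProduct.tmul_mul_tmul]
    | add a b ha hb => rw [map_add, map_add, ha, hb]
  have h1 : Algebra.trace K (K ⊗[F] E) ((1:K) ⊗ₜ x)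
      = algebraMap F K (Algebra.trace F E x) := by
    rw [Algebra.trace_apply, hbc, LinearMap.trace_baseChange, Algebra.trace_apply]
  have h2 : (k ⊗ₜ x : K ⊗[F] E) = k • ((1:K) ⊗ₜ x) := by
    rw [TensorProduct.smul_tmul', smul_eq_mul, mul_one]
  rw [h2, map_smul, h1, smul_eq_mul]

lemma auxTraceNondeg {F K E : Type} [Field F] [CommRing K] [Algebra F K] [CommRing E]
    [Algebra F E] [Module.Finite F E]
    (δ : K)
    (hpair : ∀ s t : F, s • (1:K) + t • δ = 0 → s = 0 ∧ t = 0)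
    (hspan : ∀ k : K, ∃ a b : F, k = a • (1:K) + b • δ)
    (hEet : ∀ x : E, x ≠ 0 → ∃ y : E, Algebra.trace F E (x * y) ≠ 0)
    (c : K ⊗[F] E) (hc : ∀ a : K ⊗[F] E, Algebra.trace K (K ⊗[F] E) (c * a) = 0) :
    c = 0 := by
  have hrepr : ∀ v : K ⊗[F] E, ∃ α β : E, v = 1 ⊗ₜ α + δ ⊗ₜ β := by
    intro v
    induction v with
    | zero => exact ⟨0, 0, by simp⟩
    | tmul k e =>
        obtain ⟨a, b, hk⟩ := hspan k
        refine ⟨a • e, b • e, ?_⟩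
        rw [hk, TensorProduct.add_tmul, TensorProduct.smul_tmul, TensorProduct.smul_tmul]
    | add v w hv hw =>
        obtain ⟨α, β, hα⟩ := hv
        obtain ⟨α', β', hα'⟩ := hw
        refine ⟨α + α', β + β', ?_⟩
        rw [hα, hα', TensorProduct.tmul_add, TensorProduct.tmul_add]
        ring
  obtain ⟨α, β, hv⟩ := hrepr c
  have hkey : ∀ e : E, Algebra.trace F E (α * e) = 0 ∧ Algebra.trace F E (β * e) = 0 := by
    intro e
    have h0 := hc (1 ⊗ₜ e)
    rw [hv, add_mul, Algebra.TensorProduct.tmul_mul_tmul, Algebra.TensorProduct.tmul_mul_tmul,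
      one_mul, mul_one, map_add, auxTrace, auxTrace, one_mul] at h0
    have h0' : (Algebra.trace F E (α * e)) • (1:K) + (Algebra.trace F E (β * e)) • δ = 0 := by
      rw [Algebra.smul_def, Algebra.smul_def, mul_one] at *
      rw [← h0]; ring
    exact hpair _ _ h0'
  by_contra hcne
  have : ¬(α = 0 ∧ β = 0) := by
    rintro ⟨h1, h2⟩
    rw [h1, h2] at hv
    simp at hv
    exact hcne hv
  rcases Classical.em (α = 0) with hα | hα
  · have hβ : β ≠ 0 := fun h => this ⟨hα, h⟩
    obtain ⟨e, he⟩ := hEet β hβ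
    exact he (hkey e).2
  · obtain ⟨e, he⟩ := hEet α hα
    exact he (hkey e).1

end AuxLemmas

set_option maxHeartbeats 1000000 in
/-- Uniqueness of conjugating data: for isometries
`r₁ : V_{E,λ} → V` and `r₂ : V_{E,λ'} → V`, the equality
`r₁ ∘ M_x ∘ r₁⁻¹ = r₂ ∘ M_x ∘ r₂⁻¹` holds for all `x ∈ K_E¹` if and only if
there exists `y ∈ K_E×` with `λ = N_{K_E/E}(y)·λ'` and `r₁ = r₂ ∘ M_y`. -/
theorem stmt14 (F K E V : Type) [Field F] [Infinite F] [CommRing K] [Algebra F K]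
    [CommRing E] [Algebra F E] [AddCommGroup V] [Module K V] (n : ℕ)
    (hchar : (2 : F) ≠ 0)
    (hK2 : Module.finrank F K = 2)
    (hKet : ∀ x : K, x ≠ 0 → ∃ y : K, Algebra.trace F K (x * y) ≠ 0)
    (conj : K →ₐ[F] K)
    (hconj : ∀ x, conj (conj x) = x)
    (hfix : ∀ x : K, conj x = x ↔ ∃ a : F, algebraMap F K a = x)
    [Module.Finite F E] (hEn : Module.finrank F E = n)
    (hEet : ∀ x : E, x ≠ 0 → ∃ y : E, Algebra.trace F E (x * y) ≠ 0)
    (B : V → V → K)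
    (hherm : ∀ x y, B x y = conj (B y x))
    (haddl : ∀ x x' y, B (x + x') y = B x y + B x' y)
    (hsmull : ∀ (a : K) (x y : V), B (a • x) y = a * B x y)
    (hnd : ∀ x : V, x ≠ 0 → ∃ y, B x y ≠ 0)
    (lam lam' : Eˣ)
    (r₁ r₂ : (K ⊗[F] E) ≃ₗ[K] V)
    (hr₁ : ∀ x y : K ⊗[F] E,
      B (r₁ x) (r₁ y) = hermFormOf conj (Algebra.TensorProduct.includeRight (lam : E)) x y)
    (hr₂ : ∀ x y : K ⊗[F] E,
      B (r₂ x) (r₂ y) = hermFormOf conj (Algebra.TensorProduct.includeRight (lam' : E)) x y) :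
    (∀ x : (K ⊗[F] E)ˣ, x ∈ normOneGroup (tensorConj conj) →
        r₁.toLinearMap ∘ₗ (Algebra.lmul K (K ⊗[F] E) (x : K ⊗[F] E)) ∘ₗ r₁.symm.toLinearMap
          = r₂.toLinearMap ∘ₗ (Algebra.lmul K (K ⊗[F] E) (x : K ⊗[F] E))
              ∘ₗ r₂.symm.toLinearMap)
      ↔ ∃ y : (K ⊗[F] E)ˣ,
          (Algebra.TensorProduct.includeRight (lam : E)
            = ((y : K ⊗[F] E) * tensorConj conj (y : K ⊗[F] E))
                * Algebra.TensorProduct.includeRight (lam' : E)) ∧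
          ∀ v : K ⊗[F] E, r₁ v = r₂ ((y : K ⊗[F] E) * v) := by
  classical
  set σA : (K ⊗[F] E) →ₐ[F] (K ⊗[F] E) := tensorConj conj with hσA
  haveI hKfin : Module.Finite F K := Module.finite_of_finrank_pos (by rw [hK2]; norm_num)
  haveI hKnt : Nontrivial K := Module.nontrivial_of_finrank_pos (R := F) (by rw [hK2]; norm_num)
  have hσtmul : ∀ (k : K) (e : E), σA (k ⊗ₜ e) = conj k ⊗ₜ e := by
    intro k e; simp [hσA, tensorConj]
  constructor
  · intro hcomm
    -- build δ
    have hconj_ne : ∃ k : K, conj k ≠ k := by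
      by_contra hcon
      push_neg at hcon
      have hle : Module.finrank F K ≤ 1 := by
        apply finrank_le_one (1 : K)
        intro w
        obtain ⟨a, ha⟩ := (hfix w).mp (hcon w)
        exact ⟨a, by rw [← ha, Algebra.algebraMap_eq_smul_one]⟩
      omega
    obtain ⟨k₀, hk₀⟩ := hconj_ne
    set δ : K := k₀ - conj k₀ with hδ
    have hδ0 : δ ≠ 0 := sub_ne_zero_of_ne (Ne.symm hk₀)
    have hδc : conj δ = -δ := by rw [hδ, map_sub, hconj]; ring
    obtain ⟨d, hd⟩ := (hfix (δ * δ)).mp (by rw [map_mul, hδc]; ring)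
    have halginj : Function.Injective (algebraMap F K) := RingHom.injective _
    have hpair : ∀ s t : F, s • (1:K) + t • δ = 0 → s = 0 ∧ t = 0 := by
      intro s t h
      have hcj : s • (1:K) - t • δ = 0 := by
        have := congrArg conj h
        rw [map_add, map_zero] at this
        rw [Algebra.smul_def, Algebra.smul_def, map_mul, map_mul, AlgHom.commutes,
          AlgHom.commutes, map_one, hδc] at this
        rw [Algebra.smul_def, Algebra.smul_def]
        rw [← this]; ring
      have hs : s = 0 := by
        have h2s : ((2 * s) • (1:K)) = 0 := by
          have := congrArg₂ (· + ·) h hcj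
          simp only [add_zero] at this
          rw [← this]; push_cast; rw [two_mul, add_smul]; ring
        have : algebraMap F K (2 * s) = 0 := by
          rw [Algebra.algebraMap_eq_smul_one]; exact h2s
        have h20 : (2 : F) * s = 0 := by
          apply halginj; rw [this, map_zero]
        rcases mul_eq_zero.mp h20 with h | h
        · exact absurd h hchar
        · exact h
      refine ⟨hs, ?_⟩
      rw [hs, zero_smul, zero_add] at h
      by_contra ht
      have : δ = 0 := by
        have := congrArg (fun x => t⁻¹ • x) h
        simpa [smul_smul, inv_mul_cancel₀ ht] using this
      exact hδ0 this
    have hli : LinearIndependent F ![(1:K), δ] := by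
      rw [LinearIndependent.pair_iff]
      intro s t hst
      exact hpair s t hst
    have hspanK : ∀ k : K, ∃ a b : F, k = a • (1:K) + b • δ := by
      have hcard : Fintype.card (Fin 2) = Module.finrank F K := by simp [hK2]
      let bK : Module.Basis (Fin 2) F K := basisOfLinearIndependentOfCardEqFinrank hli hcard
      have hbK : ∀ i, bK i = ![(1:K), δ] i := fun i => by
        simp [bK, coe_basisOfLinearIndependentOfCardEqFinrank]
      intro k
      refine ⟨bK.repr k 0, bK.repr k 1, ?_⟩
      have := bK.sum_repr k
      rw [Fin.sum_univ_two, hbK 0, hbK 1] at this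
      simpa using this.symm
    -- δ is a unit
    have hdne : d ≠ 0 := by
      intro hd0
      rw [hd0, map_zero] at hd
      obtain ⟨y, hy⟩ := hKet δ hδ0
      apply hy
      have hnil : IsNilpotent (Algebra.lmul F K (δ * y)) := by
        refine ⟨2, ?_⟩
        rw [← map_pow]
        have : (δ * y) ^ 2 = 0 := by
          have : (δ * y) ^ 2 = (δ * δ) * (y * y) := by ring
          rw [this, ← hd]; ring
        rw [this, map_zero]
      have := LinearMap.isNilpotent_trace_of_isNilpotent hnil
      rw [Algebra.trace_apply]
      exact this.eq_zero
    have hδunit : ∃ δinv : K, δinv * δ = 1 := by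
      refine ⟨(-d)⁻¹ • conj δ, ?_⟩
      rw [hδc, Algebra.smul_def, mul_assoc]
      have : -δ * δ = algebraMap F K (-d) := by rw [neg_mul, map_neg, hd]
      rw [this, ← map_mul, inv_mul_cancel₀ (neg_ne_zero.mpr hdne), map_one]
    obtain ⟨δinv, hδinv⟩ := hδunit
    -- the commutation property
    set S : Set (K ⊗[F] E) := {x | x * σA x = 1} with hSdef
    have hSq : ∀ a ∈ S, ∀ v : V,
        r₁ (a * r₁.symm v) = r₂ (a * r₂.symm v) := by
      intro a ha v
      have haU : a * σA a = 1 := ha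
      set xa : (K ⊗[F] E)ˣ := ⟨a, σA a, haU, by rw [mul_comm]; exact haU⟩ with hxa
      have hmem : xa ∈ normOneGroup σA := by
        rw [normOneGroup, MonoidHom.mem_ker]
        apply Units.ext
        show ((normMap σA) xa : K ⊗[F] E) = 1
        rw [normMap, MonoidHom.mul_apply]
        simp only [MonoidHom.id_apply, Units.val_mul, Units.coe_map]
        exact haU
      have := hcomm xa hmem
      have happ := LinearMap.congr_fun this v
      simpa [Algebra.coe_lmul_eq_mul, LinearMap.mul_apply'] using happ
    set T : (K ⊗[F] E) →ₗ[K] (K ⊗[F] E) := r₂.symm.toLinearMap ∘ₗ r₁.toLinearMap with hT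
    set T' : (K ⊗[F] E) →ₗ[K] (K ⊗[F] E) := r₁.symm.toLinearMap ∘ₗ r₂.toLinearMap with hT'
    have hTa : ∀ a ∈ S, ∀ u, T (a * u) = a * T u := by
      intro a ha u
      have := hSq a ha (r₁ u)
      rw [r₁.symm_apply_apply] at this
      have : r₂.symm (r₁ (a * u)) = r₂.symm (r₂ (a * r₂.symm (r₁ u))) := by rw [this]
      rw [r₂.symm_apply_apply] at this
      simpa [hT] using this
    have hT'a : ∀ a ∈ S, ∀ u, T' (a * u) = a * T' u := by
      intro a ha u
      have := (hSq a ha (r₂ u)).symm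
      rw [r₂.symm_apply_apply] at this
      have : r₁.symm (r₂ (a * u)) = r₁.symm (r₁ (a * r₁.symm (r₂ u))) := by rw [this]
      rw [r₁.symm_apply_apply] at this
      simpa [hT'] using this
    -- commutant is a submodule
    have hspanA : ∀ v : K ⊗[F] E, v ∈ Submodule.span K S := by
      have h1e : ∀ e : E, ((1:K) ⊗ₜ e : K ⊗[F] E) ∈ Submodule.span K S := by
        intro e
        have hskew : σA (δ ⊗ₜ e) = -(δ ⊗ₜ e) := by
          rw [hσtmul, hδc, TensorProduct.neg_tmul]
        have hmem : (δ ⊗ₜ e : K ⊗[F] E) ∈ Submodule.span F S :=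
          auxSpanSkew σA hchar _ hskew
        have hmem' : (δ ⊗ₜ e : K ⊗[F] E) ∈ Submodule.span K S :=
          Submodule.span_subset_span F K S hmem
        have : ((1:K) ⊗ₜ e : K ⊗[F] E) = δinv • (δ ⊗ₜ e : K ⊗[F] E) := by
          rw [TensorProduct.smul_tmul', smul_eq_mul, hδinv]
        rw [this]
        exact Submodule.smul_mem _ _ hmem'
      intro v
      induction v with
      | zero => exact Submodule.zero_mem _
      | tmul k e =>
          have : (k ⊗ₜ e : K ⊗[F] E) = k • ((1:K) ⊗ₜ e) := by
            rw [TensorProduct.smul_tmul', smul_eq_mul, mul_one]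
          rw [this]
          exact Submodule.smul_mem _ _ (h1e e)
      | add a b ha hb => exact Submodule.add_mem _ ha hb
    have hcommutant : ∀ (Tm : (K ⊗[F] E) →ₗ[K] (K ⊗[F] E)),
        (∀ a ∈ S, ∀ u, Tm (a * u) = a * Tm u) → ∀ v u, Tm (v * u) = v * Tm u := by
      intro Tm hTm v u
      set Z : Submodule K (K ⊗[F] E) :=
        { carrier := {v | ∀ u, Tm (v * u) = v * Tm u}
          add_mem' := by
            intro a b ha hb u
            rw [add_mul, map_add, ha, hb, add_mul]
          zero_mem' := by intro u; rw [zero_mul, map_zero, zero_mul]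
          smul_mem' := by
            intro k a ha u
            rw [smul_mul_assoc, map_smul, ha, smul_mul_assoc] } with hZ
      have hSZ : S ⊆ Z := fun a ha => hTm a ha
      have : Submodule.span K S ≤ Z := Submodule.span_le.mpr hSZ
      exact this (hspanA v) u
    have hTall := hcommutant T hTa
    have hT'all := hcommutant T' hT'a
    set y₀ : K ⊗[F] E := T 1 with hy₀
    set y₀' : K ⊗[F] E := T' 1 with hy₀'
    have hTv : ∀ v, T v = v * y₀ := by
      intro v
      have := hTall v 1
      rwa [mul_one, ← hy₀] at this
    have hT'v : ∀ v, T' v = v * y₀' := by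
      intro v
      have := hT'all v 1
      rwa [mul_one, ← hy₀'] at this
    have hyy' : y₀' * y₀ = 1 := by
      have h1 : T y₀' = y₀' * y₀ := hTv y₀'
      have h2 : T (T' 1) = 1 := by
        simp [hT, hT']
      rw [← hy₀'] at h2
      rw [h1] at h2
      exact h2
    refine ⟨⟨y₀, y₀', by rw [mul_comm]; exact hyy', hyy'⟩, ?_, ?_⟩
    · -- the lambda relation
      show Algebra.TensorProduct.includeRight (lam : E)
        = (y₀ * σA y₀) * Algebra.TensorProduct.includeRight (lam' : E)
      set lamA : K ⊗[F] E := Algebra.TensorProduct.includeRight (lam : E) with hlamA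
      set lamA' : K ⊗[F] E := Algebra.TensorProduct.includeRight (lam' : E) with hlamA'
      have hr12 : ∀ v, r₁ v = r₂ (y₀ * v) := by
        intro v
        have : r₂ (T v) = r₁ v := by simp [hT]
        rw [← this, hTv, mul_comm]
      have hc : ∀ a : K ⊗[F] E,
          Algebra.trace K (K ⊗[F] E) ((lamA - y₀ * σA y₀ * lamA') * a) = 0 := by
        intro a
        have e1 : B (r₁ a) (r₁ 1) = Algebra.trace K (K ⊗[F] E) (lamA * a) := by
          rw [hr₁ a 1]
          show Algebra.trace K (K ⊗[F] E) (lamA * a * σA 1) = _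
          rw [map_one, mul_one]
        have e2 : B (r₁ a) (r₁ 1)
            = Algebra.trace K (K ⊗[F] E) ((y₀ * σA y₀ * lamA') * a) := by
          rw [hr12 a, hr12 1, mul_one, hr₂ (y₀ * a) y₀]
          show Algebra.trace K (K ⊗[F] E) (lamA' * (y₀ * a) * σA y₀) = _
          congr 1
          ring
        rw [sub_mul, map_sub, ← e1, ← e2, sub_self]
      exact sub_eq_zero.mp (auxTraceNondeg δ hpair hspanK hEet _ hc)
    · intro v
      show r₁ v = r₂ (y₀ * v)
      have : r₂ (T v) = r₁ v := by simp [hT]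
      rw [← this, hTv, mul_comm]
  · rintro ⟨y, hylam, hyv⟩
    intro x hx
    apply LinearMap.ext
    intro v
    simp only [LinearMap.coe_comp, Function.comp_apply, LinearEquiv.coe_coe,
      Algebra.coe_lmul_eq_mul, LinearMap.mul_apply']
    have hsymm : r₂.symm v = (y : K ⊗[F] E) * r₁.symm v := by
      have h1 : r₂.symm (r₂ ((y : K ⊗[F] E) * r₁.symm v)) = r₂.symm v := by
        rw [← hyv (r₁.symm v), r₁.apply_symm_apply]
      rw [r₂.symm_apply_apply] at h1
      exact h1.symm
    rw [hyv ((x : K ⊗[F] E) * r₁.symm v), hsymm]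
    congr 1
    ring
end

section
/- (Conjugacy of admissible embeddings detects norms.) Let λ, λ' ∈ E× be such that V_{E,λ} and V_{E,λ'} are both isomorphic to V as hermitian spaces, with isometries r : V_{E,λ} → V and r′ : V_{E,λ'} → V. Define embeddings i, i′ : K_E¹ → U(V) by i(x) = r ∘ M_x ∘ r⁻¹ and i′(x) = r′ ∘ M_x ∘ (r′)⁻¹. Then there exists h ∈ U(V) with h ∘ i(x) ∘ h⁻¹ = i′(x) for all x ∈ K_E¹ if and only if λ⁻¹λ' ∈ N_{K_E/E}(K_E×). -/
open scoped TensorProduct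

section Aux

variable {F K E : Type} [Field F] [CommRing K] [Algebra F K]
  [CommRing E] [Algebra F E]

lemma tensorConj_tensorConj (conj : K →ₐ[F] K) (hconj : ∀ x, conj (conj x) = x)
    (z : K ⊗[F] E) : tensorConj conj (tensorConj conj z) = z := by
  induction z using TensorProduct.induction_on with
  | zero => simp
  | tmul k e => simp [tensorConj, hconj]
  | add x y hx hy => simp only [map_add, hx, hy]

lemma trace_one_tmul [Module.Finite F E] (e : E) :
    Algebra.trace K (K ⊗[F] E) ((1 : K) ⊗ₜ[F] e) = algebraMap F K (Algebra.trace F E e) := by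
  have h1 : Algebra.lmul K (K ⊗[F] E) ((1 : K) ⊗ₜ[F] e)
      = (Algebra.lmul F E e).baseChange K := by
    apply LinearMap.ext; intro z
    induction z using TensorProduct.induction_on with
    | zero => simp
    | tmul k x =>
        simp [Algebra.coe_lmul_eq_mul, LinearMap.mul_apply',
          Algebra.TensorProduct.tmul_mul_tmul]
    | add x y hx hy => simp only [map_add, hx, hy]
  rw [Algebra.trace_apply, h1, LinearMap.trace_baseChange, ← Algebra.trace_apply]

lemma trace_nondeg [Module.Finite F E]
    (hEet : ∀ x : E, x ≠ 0 → ∃ y : E, Algebra.trace F E (x * y) ≠ 0)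
    (d : K ⊗[F] E) (hd : ∀ w, Algebra.trace K (K ⊗[F] E) (d * w) = 0) : d = 0 := by
  classical
  have hB : (Algebra.traceForm F E).Nondegenerate := by
    constructor <;> intro x hx <;> by_contra hxne <;> obtain ⟨y, hy⟩ := hEet x hxne <;>
    exact hy (by simpa [Algebra.traceForm_apply, mul_comm] using hx y)
  let b := Module.Free.chooseBasis F E
  let b' := (Algebra.traceForm F E).dualBasis hB b
  let bb := Algebra.TensorProduct.basis K b
  have key : ∀ j, bb.repr d j = 0 := by
    intro j
    have hterm : ∀ i, Algebra.trace K (K ⊗[F] E)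
        ((bb.repr d i • bb i) * ((1:K) ⊗ₜ[F] b' j))
        = if i = j then bb.repr d i else 0 := by
      intro i
      rw [smul_mul_assoc, map_smul, Algebra.TensorProduct.basis_apply,
        Algebra.TensorProduct.tmul_mul_tmul, one_mul, trace_one_tmul]
      have hδ : Algebra.trace F E (b i * b' j) = if i = j then 1 else 0 := by
        rw [mul_comm, ← Algebra.traceForm_apply,
          LinearMap.BilinForm.apply_dualBasis_left]
      rw [hδ]
      split <;> simp
    have h2 : Algebra.trace K (K ⊗[F] E) (d * ((1:K) ⊗ₜ[F] b' j)) = bb.repr d j := by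
      conv_lhs => rw [← Module.Basis.sum_repr bb d, Finset.sum_mul, map_sum]
      rw [Finset.sum_congr rfl (fun i _ => hterm i), Finset.sum_ite_eq' Finset.univ j]
      simp
    rw [hd _] at h2
    exact h2.symm
  exact bb.ext_elem fun i => by rw [key i, map_zero, Finsupp.zero_apply]

lemma exists_good_eps {A : Type} [CommRing A] [Algebra F A] [Infinite F]
    [FiniteDimensional F A] (m : A) :
    ∃ ε : F, ε ≠ 0 ∧ IsUnit (1 + ε • m) := by
  classical
  set f : Module.End F A := Algebra.lmul F A m with hf
  have hp : minpoly F f ≠ 0 := minpoly.ne_zero (LinearMap.isIntegral f)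
  have hsub : {ε : F | ¬ IsUnit (1 + ε • m)} ⊆
      insert 0 ((fun μ : F => -μ⁻¹) '' {μ | (minpoly F f).IsRoot μ}) := by
    intro ε hε
    by_cases h0 : ε = 0
    · exact Set.mem_insert_iff.mpr (Or.inl h0)
    refine Set.mem_insert_iff.mpr (Or.inr ⟨-ε⁻¹, ?_, by
      show -(-ε⁻¹)⁻¹ = ε
      rw [inv_neg, neg_neg, inv_inv]⟩)
    have hni : ¬ Function.Injective (Algebra.lmul F A (1 + ε • m)) := by
      intro hinj
      have hsurj := (LinearMap.injective_iff_surjective).mp hinj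
      obtain ⟨v, hv⟩ := hsurj 1
      refine hε (IsUnit.of_mul_eq_one v ?_)
      have : (1 + ε • m) * v = v + ε • (m * v) := by
        rw [add_mul, one_mul, smul_mul_assoc]
      rw [this]
      simpa [Algebra.coe_lmul_eq_mul, LinearMap.mul_apply'] using hv
    rw [Function.not_injective_iff] at hni
    obtain ⟨a, c, hac, hne⟩ := hni
    have hx0 : a - c ≠ 0 := sub_ne_zero.mpr hne
    have hx : (1 + ε • m) * (a - c) = 0 := by
      have : (1 + ε • m) * a = (1 + ε • m) * c := by
        have ha : ∀ z : A, (1 + ε • m) * z = z + ε • (m * z) := fun z => by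
          rw [add_mul, one_mul, smul_mul_assoc]
        rw [ha, ha]
        simpa [Algebra.coe_lmul_eq_mul, LinearMap.mul_apply'] using hac
      rw [mul_sub, this, sub_self]
    have heig : f (a - c) = (-ε⁻¹) • (a - c) := by
      have h1 : (a - c) + ε • (m * (a - c)) = 0 := by
        have h1' := hx
        rw [add_mul, one_mul, smul_mul_assoc] at h1'
        exact h1'
      have h2 : ε • (m * (a - c)) = -(a - c) := by
        have := eq_neg_of_add_eq_zero_right h1
        rw [this]
      have h3 : m * (a - c) = (-ε⁻¹) • (a - c) := by
        have h4 := congrArg (fun z => ε⁻¹ • z) h2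
        simp only [smul_smul, inv_mul_cancel₀ h0, one_smul] at h4
        rw [h4, neg_smul, smul_neg]
      simpa [hf, Algebra.coe_lmul_eq_mul, LinearMap.mul_apply'] using h3
    exact Module.End.hasEigenvalue_iff_isRoot.mp
      (Module.End.hasEigenvalue_of_hasEigenvector
        ⟨Module.End.mem_eigenspace_iff.mpr heig, hx0⟩)
  have hfin0 : {ε : F | ¬ IsUnit (1 + ε • m)}.Finite :=
    Set.Finite.subset
      (Set.Finite.insert 0 ((Polynomial.finite_setOf_isRoot hp).image _)) hsub
  obtain ⟨ε, hε⟩ := (hfin0.insert 0).infinite_compl.nonempty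
  rw [Set.mem_compl_iff, Set.mem_insert_iff, not_or] at hε
  exact ⟨ε, hε.1, not_not.mp hε.2⟩

lemma exists_inv_mem {A : Type} [CommRing A] [Algebra F A] [Algebra K A]
    [IsScalarTower F K A] [FiniteDimensional F A]
    (W : Subalgebra K A) {c : A} (hc : c ∈ W) (hcu : IsUnit c) :
    ∃ v ∈ W, c * v = 1 := by
  let M := Submodule.restrictScalars F (Subalgebra.toSubmodule W)
  have hmem : ∀ x : M, (x : A) ∈ W := fun x => x.2
  let φ : M →ₗ[F] M :=
    { toFun := fun x => ⟨c * (x : A), W.mul_mem hc (hmem x)⟩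
      map_add' := by intro x y; ext; simp [mul_add]
      map_smul' := by intro a x; ext; simp [Algebra.mul_smul_comm]
    }
  have hinj : Function.Injective φ := by
    intro x y hxy
    ext
    exact hcu.mul_left_cancel (congrArg Subtype.val hxy)
  obtain ⟨v, hv⟩ := (LinearMap.injective_iff_surjective.mp hinj) ⟨1, W.one_mem⟩
  exact ⟨(v : A), hmem v, congrArg Subtype.val hv⟩

lemma adjoin_normOne_eq_top
    [Infinite F] [Module.Finite F K] [Module.Finite F E]
    (hchar : (2:F) ≠ 0) (hK2 : Module.finrank F K = 2)
    (hKet : ∀ x : K, x ≠ 0 → ∃ y : K, Algebra.trace F K (x * y) ≠ 0)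
    (conj : K →ₐ[F] K) (hconj : ∀ x, conj (conj x) = x)
    (hfix : ∀ x : K, conj x = x ↔ ∃ a : F, algebraMap F K a = x)
    (z : K ⊗[F] E) :
    z ∈ Algebra.adjoin K {x : K ⊗[F] E | x * tensorConj conj x = 1} := by
  classical
  have hnt : Nontrivial K := Module.nontrivial_of_finrank_eq_succ hK2
  -- a skew element t
  obtain ⟨x0, hx0⟩ : ∃ x : K, conj x ≠ x := by
    by_contra hall
    push_neg at hall
    have hsurj : Function.Surjective (algebraMap F K) := fun x => (hfix x).mp (hall x)
    have hinj : Function.Injective (algebraMap F K) := (algebraMap F K).injective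
    have h1 : Module.finrank F K = 1 := by
      let eL : F ≃ₗ[F] K := LinearEquiv.ofBijective (Algebra.linearMap F K) ⟨hinj, hsurj⟩
      rw [← eL.finrank_eq, Module.finrank_self]
    rw [h1] at hK2; exact absurd hK2 (by norm_num)
  set t : K := x0 - conj x0 with htdef
  have ht : conj t = -t := by rw [htdef, map_sub, hconj]; ring
  have tne : t ≠ 0 := sub_ne_zero.mpr (Ne.symm hx0)
  have ht2 : conj (t * t) = t * t := by rw [map_mul, ht]; ring
  obtain ⟨a, ha⟩ := (hfix _).mp ht2
  have hane : a ≠ 0 := by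
    intro h0
    have htt : t * t = 0 := by rw [← ha, h0, map_zero]
    obtain ⟨y, hy⟩ := hKet t tne
    apply hy
    have hnil : IsNilpotent (t * y) := ⟨2, by
      have : (t * y) ^ 2 = (t * t) * (y * y) := by ring
      rw [this, htt, zero_mul]⟩
    exact (Algebra.isNilpotent_trace_of_isNilpotent (R := F) hnil).eq_zero
  have htu : IsUnit t := by
    refine IsUnit.of_mul_eq_one (a := t) (a⁻¹ • t) ?_
    rw [mul_smul_comm, ← ha, Algebra.smul_def, ← map_mul, inv_mul_cancel₀ hane, map_one]
  -- main induction
  induction z using TensorProduct.induction_on with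
  | zero => exact zero_mem _
  | add x y hx hy => exact add_mem hx hy
  | tmul k e =>
    set S : Set (K ⊗[F] E) := {x | x * tensorConj conj x = 1} with hSdef
    have he : (1:K) ⊗ₜ[F] e ∈ Algebra.adjoin K S := by
      set σm : (K ⊗[F] E) →* (K ⊗[F] E) := (tensorConj conj).toRingHom.toMonoidHom with hσm
      have hσmval : ∀ x, σm x = tensorConj conj x := fun _ => rfl
      set m : K ⊗[F] E := t ⊗ₜ[F] e with hmdef
      have hσm' : tensorConj conj m = -m := by
        rw [hmdef]
        show Algebra.TensorProduct.map conj (AlgHom.id F E) (t ⊗ₜ[F] e) = -(t ⊗ₜ[F] e)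
        rw [Algebra.TensorProduct.map_tmul, ht, AlgHom.coe_id, id_eq,
          TensorProduct.neg_tmul]
      obtain ⟨ε, hεne, hεu⟩ := exists_good_eps (F := F) m
      have hσu : tensorConj conj (1 + ε • m) = 1 - ε • m := by
        rw [map_add, map_one, map_smul, hσm', smul_neg, ← sub_eq_add_neg]
      set u : (K ⊗[F] E)ˣ := hεu.unit with hu
      have hu1 : (u : K ⊗[F] E) = 1 + ε • m := hεu.unit_spec
      set u' : (K ⊗[F] E)ˣ := Units.map σm u with hu'
      have hu'val : (u' : K ⊗[F] E) = 1 - ε • m := by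
        rw [hu', Units.coe_map, hσmval, hu1, hσu]
      have huu' : Units.map σm u' = u := by
        apply Units.ext
        rw [Units.coe_map, hσmval, hu'val, ← hσu,
          tensorConj_tensorConj conj hconj, hu1]
      set w : (K ⊗[F] E)ˣ := u * u'⁻¹ with hw
      have hwmap : Units.map σm w = u' * u⁻¹ := by
        rw [hw, map_mul, map_inv, huu']
      have hwS : (w : K ⊗[F] E) ∈ S := by
        show (w : K ⊗[F] E) * tensorConj conj (w : K ⊗[F] E) = 1
        rw [← hσmval, ← Units.coe_map, ← Units.val_mul, hwmap, hw]
        have hg : u * u'⁻¹ * (u' * u⁻¹) = 1 := by group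
        calc (↑u * ↑u'⁻¹ * (↑u' * ↑u⁻¹) : K ⊗[F] E) = ↑(u * u'⁻¹ * (u' * u⁻¹)) := by
              rw [Units.val_mul, Units.val_mul, Units.val_mul]
          _ = 1 := by rw [hg, Units.val_one]
      have hwW : (w : K ⊗[F] E) ∈ Algebra.adjoin K S := Algebra.subset_adjoin hwS
      have hcW : (1 + (w : K ⊗[F] E)) ∈ Algebra.adjoin K S := add_mem (one_mem _) hwW
      have hkey : (u' : K ⊗[F] E) * (1 + (w : K ⊗[F] E)) = 2 := by
        have h5 : u' * w = u := by rw [hw, mul_comm u, ← mul_assoc, mul_inv_cancel, one_mul]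
        have h5' : (u' : K ⊗[F] E) * (w : K ⊗[F] E) = u := by
          rw [← Units.val_mul, h5]
        rw [mul_add, mul_one, h5', hu'val, hu1]
        ring
      have h2u : IsUnit (2 : K ⊗[F] E) := by
        have h2a : (2 : K ⊗[F] E) = algebraMap F (K ⊗[F] E) 2 := by
          rw [map_ofNat]
        rw [h2a]
        exact IsUnit.of_mul_eq_one (algebraMap F (K ⊗[F] E) 2⁻¹)
          (by rw [← map_mul, mul_inv_cancel₀ hchar, map_one])
      have hcu : IsUnit (1 + (w : K ⊗[F] E)) := by
        have h6 := h2u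
        rw [← hkey] at h6
        exact isUnit_of_mul_isUnit_right h6
      obtain ⟨v, hvW, hv⟩ := exists_inv_mem (F := F) (Algebra.adjoin K S) hcW hcu
      have hu'W : (u' : K ⊗[F] E) ∈ Algebra.adjoin K S := by
        have h7 : (u' : K ⊗[F] E) = (2:K) • v := by
          have : (u' : K ⊗[F] E) = ((u' : K ⊗[F] E) * (1 + (w : K ⊗[F] E))) * v := by
            rw [mul_assoc, hv, mul_one]
          rw [this, hkey, Algebra.smul_def, map_ofNat]
        rw [h7]
        exact Subalgebra.smul_mem _ hvW _
      have hmW : m ∈ Algebra.adjoin K S := by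
        have h8 : ε • m = 1 - (u' : K ⊗[F] E) := by rw [hu'val]; ring
        have h9 : ε • m ∈ Algebra.adjoin K S := by
          rw [h8]; exact sub_mem (one_mem _) hu'W
        have h10 : m = (algebraMap F K ε⁻¹) • (ε • m) := by
          rw [algebraMap_smul, smul_smul, inv_mul_cancel₀ hεne, one_smul]
        rw [h10]
        exact Subalgebra.smul_mem _ h9 _
      have h11 : (1:K) ⊗ₜ[F] e = ((htu.unit⁻¹ : Kˣ) : K) • m := by
        rw [hmdef, TensorProduct.smul_tmul', smul_eq_mul, htu.val_inv_mul]
      rw [h11]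
      exact Subalgebra.smul_mem _ hmW _
    have h12 : k ⊗ₜ[F] e = k • ((1:K) ⊗ₜ[F] e) := by
      rw [TensorProduct.smul_tmul', smul_eq_mul, mul_one]
    rw [h12]
    exact Subalgebra.smul_mem _ he k

end Aux
/-- Conjugacy of admissible embeddings detects norms: for
isometries `r : V_{E,λ} → V` and `r′ : V_{E,λ'} → V`, the admissible embeddings
`i(x) = r ∘ M_x ∘ r⁻¹` and `i′(x) = r′ ∘ M_x ∘ (r′)⁻¹` of `K_E¹` into `U(V)` are
conjugate by an element `h ∈ U(V)` if and only if `λ⁻¹λ' ∈ N_{K_E/E}(K_E×)`. -/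
theorem stmt15 (F K E V : Type) [Field F] [Infinite F] [CommRing K] [Algebra F K]
    [CommRing E] [Algebra F E] [AddCommGroup V] [Module K V] (n : ℕ)
    (hchar : (2 : F) ≠ 0)
    (hK2 : Module.finrank F K = 2)
    (hKet : ∀ x : K, x ≠ 0 → ∃ y : K, Algebra.trace F K (x * y) ≠ 0)
    (conj : K →ₐ[F] K)
    (hconj : ∀ x, conj (conj x) = x)
    (hfix : ∀ x : K, conj x = x ↔ ∃ a : F, algebraMap F K a = x)
    [Module.Finite F E] (hEn : Module.finrank F E = n)
    (hEet : ∀ x : E, x ≠ 0 → ∃ y : E, Algebra.trace F E (x * y) ≠ 0)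
    (B : V → V → K)
    (hherm : ∀ x y, B x y = conj (B y x))
    (haddl : ∀ x x' y, B (x + x') y = B x y + B x' y)
    (hsmull : ∀ (a : K) (x y : V), B (a • x) y = a * B x y)
    (hnd : ∀ x : V, x ≠ 0 → ∃ y, B x y ≠ 0)
    (lam lam' : Eˣ)
    (r r' : (K ⊗[F] E) ≃ₗ[K] V)
    (hr : ∀ x y : K ⊗[F] E,
      B (r x) (r y) = hermFormOf conj (Algebra.TensorProduct.includeRight (lam : E)) x y)
    (hr' : ∀ x y : K ⊗[F] E,
      B (r' x) (r' y) = hermFormOf conj (Algebra.TensorProduct.includeRight (lam' : E)) x y) :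
    (∃ h : V ≃ₗ[K] V,
        (∀ u v : V, B (h u) (h v) = B u v) ∧
        ∀ x : (K ⊗[F] E)ˣ, x ∈ normOneGroup (tensorConj conj) →
          h.toLinearMap
              ∘ₗ (r.toLinearMap ∘ₗ (Algebra.lmul K (K ⊗[F] E) (x : K ⊗[F] E))
                    ∘ₗ r.symm.toLinearMap)
              ∘ₗ h.symm.toLinearMap
            = r'.toLinearMap ∘ₗ (Algebra.lmul K (K ⊗[F] E) (x : K ⊗[F] E))
                ∘ₗ r'.symm.toLinearMap)
      ↔ ∃ y : (K ⊗[F] E)ˣ,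
          Algebra.TensorProduct.includeRight (lam' : E)
            = Algebra.TensorProduct.includeRight (lam : E)
              * ((y : K ⊗[F] E) * tensorConj conj (y : K ⊗[F] E)) := by
  classical
  have hKfin : Module.Finite F K := FiniteDimensional.of_finrank_pos (by rw [hK2]; norm_num)
  set μ : K ⊗[F] E := Algebra.TensorProduct.includeRight (lam : E) with hμ
  set μ' : K ⊗[F] E := Algebra.TensorProduct.includeRight (lam' : E) with hμ'
  constructor
  · rintro ⟨h, hiso, hcomm⟩
    set g : (K ⊗[F] E) ≃ₗ[K] (K ⊗[F] E) := (r.trans h).trans r'.symm with hg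
    have hgapply : ∀ v : K ⊗[F] E, g v = r'.symm (h (r v)) := fun v => rfl
    -- commuting with norm-one elements
    have hcom : ∀ x : K ⊗[F] E, x * tensorConj conj x = 1 →
        ∀ v : K ⊗[F] E, g (x * v) = x * g v := by
      intro x hx v
      set X : (K ⊗[F] E)ˣ :=
        ⟨x, tensorConj conj x, hx, by rw [mul_comm] at hx; exact hx⟩ with hX
      have hXmem : X ∈ normOneGroup (tensorConj conj) := by
        have : normMap (tensorConj conj) X = 1 := by
          apply Units.ext
          show (X : K ⊗[F] E) * (tensorConj conj) (X : K ⊗[F] E) = 1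
          exact hx
        exact this
      have hc := hcomm X hXmem
      have hpt := congrArg (fun (φ : V →ₗ[K] V) => φ (h (r v))) hc
      simp only [LinearMap.coe_comp, Function.comp_apply, LinearEquiv.coe_coe,
        LinearEquiv.symm_apply_apply, Algebra.coe_lmul_eq_mul, LinearMap.mul_apply'] at hpt
      -- hpt : h (r (x * v)) = r' (x * r'.symm (h (r v)))
      calc g (x * v) = r'.symm (h (r (x * v))) := rfl
        _ = r'.symm (r' ((X : K ⊗[F] E) * r'.symm (h (r v)))) := by rw [hpt]
        _ = x * g v := by rw [LinearEquiv.symm_apply_apply]; rfl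
    have hcomall : ∀ x v : K ⊗[F] E, g (x * v) = x * g v := by
      intro x
      have hx := adjoin_normOne_eq_top hchar hK2 hKet conj hconj hfix x
      refine Algebra.adjoin_induction ?_ ?_ ?_ ?_ hx
      · exact fun y hy v => hcom y hy v
      · intro k v
        rw [← Algebra.smul_def, map_smul, Algebra.smul_def]
      · intro p q _ _ hp hq v
        rw [add_mul, map_add, hp, hq, add_mul]
      · intro p q _ _ hp hq v
        rw [mul_assoc, hp, hq, mul_assoc]
    set y₀ : K ⊗[F] E := g 1 with hy₀
    have hgv : ∀ v, g v = v * y₀ := by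
      intro v
      conv_lhs => rw [← mul_one v]
      rw [hcomall v 1, hy₀]
    have hy₀u : IsUnit y₀ := by
      obtain ⟨u, hu⟩ := g.surjective 1
      refine IsUnit.of_mul_eq_one u ?_
      rw [mul_comm, ← hgv u, hu]
    -- trace identity
    have htr : ∀ v : K ⊗[F] E,
        Algebra.trace K (K ⊗[F] E)
          ((μ' * (y₀ * tensorConj conj y₀) - μ) * v) = 0 := by
      intro v
      have h1 := hiso (r v) (r 1)
      have e1 : h (r v) = r' (g v) := by rw [hgapply, LinearEquiv.apply_symm_apply]
      have e2 : h (r 1) = r' (g 1) := by rw [hgapply, LinearEquiv.apply_symm_apply]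
      rw [e1, e2, hr', hr] at h1
      rw [hgv v, hgv 1, one_mul] at h1
      unfold hermFormOf at h1
      -- h1 : Tr (μ' * (v * y₀) * σ y₀) = Tr (μ * v * σ 1)
      rw [map_one, mul_one] at h1
      have h2 : (μ' * (y₀ * tensorConj conj y₀) - μ) * v
          = μ' * (v * y₀) * tensorConj conj y₀ - μ * v := by ring
      rw [h2, map_sub, h1, sub_self]
    have hdz : μ' * (y₀ * tensorConj conj y₀) - μ = 0 := trace_nondeg hEet _ htr
    have hdz' : μ' * (y₀ * tensorConj conj y₀) = μ := sub_eq_zero.mp hdz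
    refine ⟨hy₀u.unit⁻¹, ?_⟩
    have hv1 : ((hy₀u.unit⁻¹ : (K ⊗[F] E)ˣ) : K ⊗[F] E) * y₀ = 1 := hy₀u.val_inv_mul
    have hv2 : tensorConj conj ((hy₀u.unit⁻¹ : (K ⊗[F] E)ˣ) : K ⊗[F] E)
        * tensorConj conj y₀ = 1 := by rw [← map_mul, hv1, map_one]
    calc μ' = μ' * ((((hy₀u.unit⁻¹ : (K ⊗[F] E)ˣ) : K ⊗[F] E) * y₀)
          * (tensorConj conj ((hy₀u.unit⁻¹ : (K ⊗[F] E)ˣ) : K ⊗[F] E)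
              * tensorConj conj y₀)) := by rw [hv1, hv2, one_mul, mul_one]
      _ = (μ' * (y₀ * tensorConj conj y₀))
          * (((hy₀u.unit⁻¹ : (K ⊗[F] E)ˣ) : K ⊗[F] E)
              * tensorConj conj ((hy₀u.unit⁻¹ : (K ⊗[F] E)ˣ) : K ⊗[F] E)) := by ring
      _ = μ * (((hy₀u.unit⁻¹ : (K ⊗[F] E)ˣ) : K ⊗[F] E)
              * tensorConj conj ((hy₀u.unit⁻¹ : (K ⊗[F] E)ˣ) : K ⊗[F] E)) := by rw [hdz']
  · rintro ⟨y, hy⟩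
    have hyy : (y : K ⊗[F] E) * ((y⁻¹ : (K ⊗[F] E)ˣ) : K ⊗[F] E) = 1 := y.mul_inv
    have hyy' : tensorConj conj (y : K ⊗[F] E)
        * tensorConj conj ((y⁻¹ : (K ⊗[F] E)ˣ) : K ⊗[F] E) = 1 := by
      rw [← map_mul, hyy, map_one]
    have key : μ' * (((y⁻¹ : (K ⊗[F] E)ˣ) : K ⊗[F] E)
        * tensorConj conj ((y⁻¹ : (K ⊗[F] E)ˣ) : K ⊗[F] E)) = μ := by
      calc μ' * (((y⁻¹ : (K ⊗[F] E)ˣ) : K ⊗[F] E)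
            * tensorConj conj ((y⁻¹ : (K ⊗[F] E)ˣ) : K ⊗[F] E))
          = μ * (((y : K ⊗[F] E) * ((y⁻¹ : (K ⊗[F] E)ˣ) : K ⊗[F] E))
            * (tensorConj conj (y : K ⊗[F] E)
              * tensorConj conj ((y⁻¹ : (K ⊗[F] E)ˣ) : K ⊗[F] E))) := by
            rw [hy]; ring
        _ = μ := by rw [hyy, hyy', one_mul, mul_one]
    set ey : (K ⊗[F] E) ≃ₗ[K] (K ⊗[F] E) := LinearEquiv.ofLinear
        (Algebra.lmul K (K ⊗[F] E) ((y⁻¹ : (K ⊗[F] E)ˣ) : K ⊗[F] E))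
        (Algebra.lmul K (K ⊗[F] E) (y : K ⊗[F] E))
        (by
          apply LinearMap.ext; intro z
          simp only [LinearMap.coe_comp, Function.comp_apply, Algebra.coe_lmul_eq_mul,
            LinearMap.mul_apply', LinearMap.id_apply]
          rw [← mul_assoc, Units.inv_mul, one_mul])
        (by
          apply LinearMap.ext; intro z
          simp only [LinearMap.coe_comp, Function.comp_apply, Algebra.coe_lmul_eq_mul,
            LinearMap.mul_apply', LinearMap.id_apply]
          rw [← mul_assoc, Units.mul_inv, one_mul]) with hey
    have heyap : ∀ z, ey z = ((y⁻¹ : (K ⊗[F] E)ˣ) : K ⊗[F] E) * z := fun z => rfl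
    have heyap' : ∀ z, ey.symm z = (y : K ⊗[F] E) * z := fun z => rfl
    refine ⟨(r.symm.trans ey).trans r', ?_, ?_⟩
    · intro u v
      simp only [LinearEquiv.trans_apply]
      rw [hr', heyap, heyap]
      conv_rhs => rw [← r.apply_symm_apply u, ← r.apply_symm_apply v]
      rw [hr]
      unfold hermFormOf
      congr 1
      rw [map_mul]
      calc μ' * (((y⁻¹ : (K ⊗[F] E)ˣ) : K ⊗[F] E) * r.symm u)
            * (tensorConj conj ((y⁻¹ : (K ⊗[F] E)ˣ) : K ⊗[F] E)
              * tensorConj conj (r.symm v))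
          = (μ' * (((y⁻¹ : (K ⊗[F] E)ˣ) : K ⊗[F] E)
              * tensorConj conj ((y⁻¹ : (K ⊗[F] E)ˣ) : K ⊗[F] E)))
            * r.symm u * tensorConj conj (r.symm v) := by ring
        _ = μ * r.symm u * tensorConj conj (r.symm v) := by rw [key]
    · intro x hx
      apply LinearMap.ext; intro v
      simp only [LinearMap.coe_comp, Function.comp_apply, LinearEquiv.coe_coe,
        LinearEquiv.trans_apply, LinearEquiv.symm_trans_apply, LinearEquiv.symm_symm,
        LinearEquiv.symm_apply_apply, LinearEquiv.apply_symm_apply,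
        Algebra.coe_lmul_eq_mul, LinearMap.mul_apply']
      rw [heyap, heyap']
      congr 1
      calc ((y⁻¹ : (K ⊗[F] E)ˣ) : K ⊗[F] E) * (x * ((y : K ⊗[F] E) * r'.symm v))
          = (((y⁻¹ : (K ⊗[F] E)ˣ) : K ⊗[F] E) * (y : K ⊗[F] E)) * (x * r'.symm v) := by
            ring
        _ = x * r'.symm v := by rw [Units.inv_mul, one_mul]
end

section
/- (Bijection between norm classes and conjugacy classes of admissible embeddings.) Let V be a nondegenerate n-dimensional hermitian space over K and E an étale F-algebra of degree n. The assignment sending a class [λ] ∈ E×/N_{K_E/E}(K_E×) with V_{E,λ} ≅ V to the U(V)-conjugacy class of the embedding i_r(x) = r ∘ M_x ∘ r⁻¹ (for any isometry r : V_{E,λ} → V) is a well-defined bijection from {[λ] ∈ E×/N_{K_E/E}(K_E×) : V_{E,λ} ≅ V} onto the set of admissible embeddings K_E¹ → U(V) modulo conjugation by U(V). -/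
open scoped TensorProduct

section

variable (F K E V : Type) [Field F] [CommRing K] [Algebra F K]
  [CommRing E] [Algebra F E] [AddCommGroup V] [Module K V]
  (conj : K →ₐ[F] K) (B : V → V → K)

/-- `r` is an isometry from `V_{E,λ}` onto `(V, B)`. -/
def IsIsometryTo (lam : Eˣ) (r : (K ⊗[F] E) ≃ₗ[K] V) : Prop :=
  ∀ x y : K ⊗[F] E,
    B (r x) (r y) = hermFormOf conj (Algebra.TensorProduct.includeRight (lam : E)) x y

/-- Elements `λ ∈ E×` such that `V_{E,λ} ≅ V` as hermitian spaces. -/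
def ReprType : Type :=
  {lam : Eˣ // ∃ r : (K ⊗[F] E) ≃ₗ[K] V, IsIsometryTo F K E V conj B lam r}

/-- The relation "`λ'/λ` is a norm from `K_E`" on `ReprType`; the quotient by it
is the set of norm classes `λ ∈ E×/N_{K_E/E}(K_E×)` with `V_{E,λ} ≅ V`. -/
def normRel (a b : ReprType F K E V conj B) : Prop :=
  ∃ y : (K ⊗[F] E)ˣ,
    Algebra.TensorProduct.includeRight ((b.val : Eˣ) : E)
      = Algebra.TensorProduct.includeRight ((a.val : Eˣ) : E)
        * ((y : K ⊗[F] E) * tensorConj conj (y : K ⊗[F] E))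

/-- Admissible embeddings of the norm-one group `K_E¹` into the unitary group of
`(V, B)`: maps of the form `x ↦ r ∘ M_x ∘ r⁻¹` for an isometry
`r : V_{E,λ} → V`. -/
def EmbType : Type :=
  {ι : normOneGroup (tensorConj conj) → (V ≃ₗ[K] V) //
    ∃ (lam : Eˣ) (r : (K ⊗[F] E) ≃ₗ[K] V), IsIsometryTo F K E V conj B lam r ∧
      ∀ (x : normOneGroup (tensorConj conj)) (v : K ⊗[F] E),
        (ι x) (r v) = r (x.val.val * v)}

/-- The relation of conjugacy by an element of the unitary group `U(V)`. -/
def conjRel (ι κ : EmbType F K E V conj B) : Prop :=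
  ∃ h : V ≃ₗ[K] V, (∀ u v : V, B (h u) (h v) = B u v) ∧
    ∀ x : normOneGroup (tensorConj conj), κ.val x = h * ι.val x * h⁻¹

end


section AuxEasy

variable {F K E V : Type} [Field F] [CommRing K] [Algebra F K]
  [CommRing E] [Algebra F E] [AddCommGroup V] [Module K V]
  (conj : K →ₐ[F] K) (B : V → V → K)

lemma tensorConj_tmul (k : K) (e : E) :
    tensorConj conj (k ⊗ₜ[F] e) = conj k ⊗ₜ[F] e := by
  simp [tensorConj]

/-- multiplication by a unit as a linear equivalence -/
noncomputable def mulUnitEquiv (x : (K ⊗[F] E)ˣ) : (K ⊗[F] E) ≃ₗ[K] (K ⊗[F] E) :=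
  LinearEquiv.ofLinear (LinearMap.mulLeft K (x : K ⊗[F] E))
    (LinearMap.mulLeft K ((x⁻¹ : (K ⊗[F] E)ˣ) : K ⊗[F] E))
    (by ext z; simp [← mul_assoc]) (by ext z; simp [← mul_assoc])

@[simp] lemma mulUnitEquiv_apply (x : (K ⊗[F] E)ˣ) (z : K ⊗[F] E) :
    mulUnitEquiv x z = (x : K ⊗[F] E) * z := rfl

/-- The compatibility condition between a representative `λ` and an embedding. -/
def Compat (a : ReprType F K E V conj B) (b : EmbType F K E V conj B) : Prop :=
  ∃ r : (K ⊗[F] E) ≃ₗ[K] V, IsIsometryTo F K E V conj B a.val r ∧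
    ∀ (x : normOneGroup (tensorConj conj)) (v : K ⊗[F] E),
      (b.val x) (r v) = r (x.val.val * v)

/-- the standard embedding attached to a representative -/
noncomputable def stdEmb (a : ReprType F K E V conj B) : EmbType F K E V conj B := by
  refine ⟨fun x => ((a.2.choose.symm.trans (mulUnitEquiv x.val)).trans a.2.choose),
    a.1, a.2.choose, a.2.choose_spec, fun x v => ?_⟩
  simp

lemma compat_stdEmb (a : ReprType F K E V conj B) : Compat conj B a (stdEmb conj B a) :=
  ⟨a.2.choose, a.2.choose_spec, fun x v => by simp [stdEmb]⟩

end AuxEasy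
section AuxRel

variable {F K E V : Type} [Field F] [CommRing K] [Algebra F K]
  [CommRing E] [Algebra F E] [AddCommGroup V] [Module K V]
  (conj : K →ₐ[F] K) (B : V → V → K)

lemma linEquiv_inv_apply (h : V ≃ₗ[K] V) (v : V) : (h⁻¹ : V ≃ₗ[K] V) v = h.symm v := rfl

lemma linEquiv_mul_apply (g h : V ≃ₗ[K] V) (v : V) : (g * h) v = g (h v) := rfl

lemma conjRel_equivalence : Equivalence (conjRel F K E V conj B) := by
  constructor
  · intro a
    exact ⟨1, fun u v => rfl, fun x => by group⟩
  · rintro a b ⟨h, hU, hc⟩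
    refine ⟨h⁻¹, fun u v => ?_, fun x => ?_⟩
    · conv_rhs => rw [show u = h (h⁻¹ u) from (h.apply_symm_apply u).symm,
        show v = h (h⁻¹ v) from (h.apply_symm_apply v).symm]
      exact (hU _ _).symm
    · rw [hc x]; group
  · rintro a b c ⟨h, hU, hc⟩ ⟨h', hU', hc'⟩
    refine ⟨h' * h, fun u v => ?_, fun x => ?_⟩
    · rw [linEquiv_mul_apply, linEquiv_mul_apply, hU', hU]
    · rw [hc' x, hc x]; group

/-- transport of compatibility along conjugation -/
lemma compat_of_conjRel {a : ReprType F K E V conj B} {b b' : EmbType F K E V conj B}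
    (hab : Compat conj B a b) (hbb' : conjRel F K E V conj B b b') :
    Compat conj B a b' := by
  obtain ⟨r, hiso, hint⟩ := hab
  obtain ⟨h, hU, hc⟩ := hbb'
  refine ⟨r.trans h, fun u v => ?_, fun x v => ?_⟩
  · show B (h (r u)) (h (r v)) = _
    rw [hU]; exact hiso u v
  · show (b'.val x) (h (r v)) = h (r _)
    rw [hc x, linEquiv_mul_apply, linEquiv_mul_apply, linEquiv_inv_apply,
      h.symm_apply_apply, hint x v]

/-- two embeddings compatible with the same representative are conjugate -/
lemma conjRel_of_compat {a : ReprType F K E V conj B} {b b' : EmbType F K E V conj B}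
    (hab : Compat conj B a b) (hab' : Compat conj B a b') :
    conjRel F K E V conj B b b' := by
  obtain ⟨r, hiso, hint⟩ := hab
  obtain ⟨r', hiso', hint'⟩ := hab'
  refine ⟨r.symm.trans r', fun u v => ?_, fun x => ?_⟩
  · show B (r' (r.symm u)) (r' (r.symm v)) = B u v
    rw [hiso']
    conv_rhs => rw [show u = r (r.symm u) from (r.apply_symm_apply u).symm,
      show v = r (r.symm v) from (r.apply_symm_apply v).symm]
    rw [hiso]
  · ext v
    set h : V ≃ₗ[K] V := r.symm.trans r' with hh
    rw [linEquiv_mul_apply, linEquiv_mul_apply, linEquiv_inv_apply]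
    have h1 : h.symm v = r (r'.symm v) := rfl
    rw [h1, hint x, show h (r _) = r' (r.symm (r _)) from rfl, r.symm_apply_apply,
      ← hint' x, r'.apply_symm_apply]

/-- transport of compatibility along the norm relation -/
lemma compat_of_normRel {a a' : ReprType F K E V conj B} {b : EmbType F K E V conj B}
    (haa' : normRel F K E V conj B a a') (hab : Compat conj B a b) :
    Compat conj B a' b := by
  obtain ⟨y, hy⟩ := haa'
  obtain ⟨r, hiso, hint⟩ := hab
  refine ⟨(mulUnitEquiv y).trans r, fun u v => ?_, fun x v => ?_⟩
  · show B (r ((y : K ⊗[F] E) * u)) (r ((y : K ⊗[F] E) * v)) = _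
    rw [hiso]
    unfold hermFormOf
    congr 1
    rw [hy, map_mul]
    ring
  · show (b.val x) (r ((y : K ⊗[F] E) * v)) = r ((y : K ⊗[F] E) * _)
    rw [hint x]
    congr 1
    ring
end AuxRel
section AuxDelta

variable {F K : Type} [Field F] [CommRing K] [Algebra F K]

lemma exists_skew_unit (hK2 : Module.finrank F K = 2)
    (hKet : ∀ x : K, x ≠ 0 → ∃ y : K, Algebra.trace F K (x * y) ≠ 0)
    (conj : K →ₐ[F] K) (hconj : ∀ x, conj (conj x) = x)
    (hfix : ∀ x : K, conj x = x ↔ ∃ a : F, algebraMap F K a = x) :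
    ∃ δ : K, IsUnit δ ∧ conj δ = -δ ∧ δ ≠ 0 := by
  haveI : Module.Finite F K := Module.finite_of_finrank_eq_succ (n := 1) (by rw [hK2])
  -- there exists k with conj k ≠ k
  have hk : ∃ k : K, conj k ≠ k := by
    by_contra h
    push_neg at h
    have hsurj : Function.Surjective (Algebra.linearMap F K) := by
      intro k
      obtain ⟨a, ha⟩ := (hfix k).mp (h k)
      exact ⟨a, ha⟩
    have := (Algebra.linearMap F K).finrank_range_le
    rw [LinearMap.range_eq_top.mpr hsurj, finrank_top, hK2, Module.finrank_self] at this
    omega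
  obtain ⟨k, hk⟩ := hk
  set δ := k - conj k with hδ
  have hδ0 : δ ≠ 0 := fun h => hk (by rwa [sub_eq_zero, eq_comm] at h)
  have hskew : conj δ = -δ := by
    rw [hδ, map_sub, hconj, neg_sub]
  have hsq : ∃ a : F, algebraMap F K a = δ * δ := by
    rw [← hfix, map_mul, hskew, neg_mul_neg]
  obtain ⟨a, ha⟩ := hsq
  have ha0 : a ≠ 0 := by
    rintro rfl
    rw [map_zero] at ha
    obtain ⟨y, hy⟩ := hKet δ hδ0
    apply hy
    have hnil : IsNilpotent (Algebra.lmul F K (δ * y)) := by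
      refine ⟨2, ?_⟩
      rw [← map_pow]
      have : (δ * y) ^ 2 = 0 := by
        have : (δ * y) ^ 2 = (δ * δ) * (y * y) := by ring
        rw [this, ← ha, zero_mul]
      rw [this, map_zero]
    have := LinearMap.isNilpotent_trace_of_isNilpotent hnil
    rw [show Algebra.trace F K (δ * y) = LinearMap.trace F K (Algebra.lmul F K (δ * y)) from
      Algebra.trace_apply F (δ * y)]
    exact this.eq_zero
  refine ⟨δ, IsUnit.of_mul_eq_one (a := δ) (δ * algebraMap F K a⁻¹) ?_, hskew, hδ0⟩
  rw [← mul_assoc, ← ha, ← map_mul, mul_inv_cancel₀ ha0, map_one]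

end AuxDelta
section AuxSpan

variable {F K E : Type} [Field F] [Infinite F] [CommRing K] [Algebra F K]
  [CommRing E] [Algebra F E] [Module.Finite F E]

open Polynomial Matrix

set_option maxHeartbeats 1000000 in
lemma span_normOne_top (hchar : (2 : F) ≠ 0)
    (hK2 : Module.finrank F K = 2)
    (hKet : ∀ x : K, x ≠ 0 → ∃ y : K, Algebra.trace F K (x * y) ≠ 0)
    (conj : K →ₐ[F] K) (hconj : ∀ x, conj (conj x) = x)
    (hfix : ∀ x : K, conj x = x ↔ ∃ a : F, algebraMap F K a = x) :
    Submodule.span K (Units.val '' ((normOneGroup (tensorConj conj) : Subgroup (K ⊗[F] E)ˣ) : Set (K ⊗[F] E)ˣ)) = ⊤ := by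
  classical
  haveI : Module.Finite F K := Module.finite_of_finrank_eq_succ (n := 1) (by rw [hK2])
  set σ' := tensorConj (E := E) conj with hσ'
  obtain ⟨δ, hδu, hδskew, hδ0⟩ := exists_skew_unit hK2 hKet conj hconj hfix
  obtain ⟨δi, hδi⟩ : ∃ δi : K, δ * δi = 1 := by
    obtain ⟨u, hu⟩ := hδu; exact ⟨↑u⁻¹, by rw [← hu]; exact u.mul_inv⟩
  set S := Submodule.span K (Units.val ''
    ((normOneGroup σ' : Subgroup (K ⊗[F] E)ˣ) : Set (K ⊗[F] E)ˣ)) with hS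
  suffices hpure : ∀ e : E, (1 : K) ⊗ₜ[F] e ∈ S by
    rw [eq_top_iff]
    intro z _
    induction z using TensorProduct.induction_on with
    | zero => exact S.zero_mem
    | tmul k e =>
      have : k ⊗ₜ[F] e = k • ((1 : K) ⊗ₜ[F] e) := by
        rw [TensorProduct.smul_tmul', smul_eq_mul, mul_one]
      rw [this]
      exact S.smul_mem k (hpure e)
    | add x y hx hy => exact S.add_mem (hx trivial) (hy trivial)
  intro e
  by_contra hne
  -- a separating functional
  set S' : Submodule F (K ⊗[F] E) := S.restrictScalars F with hS'
  have hne' : (1 : K) ⊗ₜ[F] e ∉ S' := hne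
  set ee : K ⊗[F] E := (1 : K) ⊗ₜ[F] e with hee
  obtain ⟨φ, hφS, hφe⟩ : ∃ φ : (K ⊗[F] E) →ₗ[F] F, (∀ z ∈ S', φ z = 0) ∧ φ ee ≠ 0 := by
    have h1 : S'.mkQ ee ≠ 0 := by
      rw [Submodule.mkQ_apply, ne_eq, Submodule.Quotient.mk_eq_zero]
      exact hne'
    have h2 := (Module.forall_dual_apply_eq_zero_iff F (S'.mkQ ee)).not.mpr h1
    push_neg at h2
    obtain ⟨φ₀, hφ₀⟩ := h2
    refine ⟨φ₀.comp S'.mkQ, fun z hz => ?_, hφ₀⟩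
    simp [Submodule.mkQ_apply, (Submodule.Quotient.mk_eq_zero S').mpr hz]
  -- the basic skew element
  set w : K ⊗[F] E := δ ⊗ₜ[F] e with hw
  have hσw : σ' w = -w := by
    rw [hw, hσ', tensorConj_tmul, hδskew, TensorProduct.neg_tmul]
  -- matrices
  set bA := Module.Free.chooseBasis F (K ⊗[F] E) with hbA
  set U := Algebra.leftMulMatrix bA (w * w) with hU
  set MX : Matrix (Module.Free.ChooseBasisIndex F (K ⊗[F] E)) (Module.Free.ChooseBasisIndex F (K ⊗[F] E)) F[X] := 1 - ((X : F[X]) ^ 2) • U.map (C : F →+* F[X]) with hMX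
  have hMmap : ∀ τ : F, MX.map (evalRingHom τ) = 1 - (τ ^ 2) • U := by
    intro τ
    ext i j
    rw [hMX]
    simp only [Matrix.map_apply, Matrix.sub_apply, Matrix.smul_apply, Matrix.one_apply,
      smul_eq_mul]
    rw [_root_.map_sub, _root_.map_mul, map_pow]
    simp [apply_ite (evalRingHom τ)]
  set P := MX.det with hP
  have hP0 : P.eval 0 = 1 := by
    have : (evalRingHom (0:F)) P = ((MX.map (evalRingHom 0)).det) := RingHom.map_det _ _
    rw [hMmap 0] at this
    simpa using this
  have hPne : P ≠ 0 := fun h => by simp [h] at hP0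
  set T : Set F := {τ : F | τ ≠ 0 ∧ P.eval τ ≠ 0} with hT
  have hTinf : T.Infinite := by
    have hfin : ({(0:F)} ∪ {τ | P.IsRoot τ}).Finite :=
      (Set.finite_singleton 0).union (P.finite_setOf_isRoot hPne)
    have : ({(0:F)} ∪ {τ | P.IsRoot τ})ᶜ ⊆ T := by
      intro τ hτ
      rw [Set.mem_compl_iff, Set.mem_union] at hτ
      push_neg at hτ
      exact ⟨fun h => hτ.1 (by simp [h]), hτ.2⟩
    exact ((hfin.infinite_compl).mono this)
  -- key facts for good parameters
  set Ψ : F[X] := ∑ j, ∑ k, (adjugate MX) j k * C ((bA.repr ee) k) * C (φ (bA j)) with hΨ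
  have evalΨ : ∀ τ : F, Ψ.eval τ =
      φ ((toLin bA bA (adjugate (1 - (τ ^ 2) • U))) ee) := by
    intro τ
    have hadj : adjugate (1 - (τ ^ 2) • U) = (adjugate MX).map (evalRingHom τ) := by
      rw [← hMmap τ, ← RingHom.mapMatrix_apply, ← RingHom.map_adjugate, RingHom.mapMatrix_apply]
    rw [hadj]
    rw [Matrix.toLin_apply, map_sum]
    rw [hΨ, Polynomial.eval_finset_sum]
    refine Finset.sum_congr rfl fun j _ => ?_
    rw [φ.map_smul, smul_eq_mul, Matrix.mulVec, dotProduct]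
    rw [Polynomial.eval_finset_sum]
    rw [Finset.sum_mul]
    refine Finset.sum_congr rfl fun k _ => ?_
    simp [Matrix.map_apply, mul_comm, mul_assoc, mul_left_comm]
  have keyT : ∀ τ ∈ T, Ψ.eval τ = 0 := by
    intro τ hτ
    obtain ⟨hτ0, hτP⟩ := hτ
    -- the element d is invertible
    set d : K ⊗[F] E := 1 - (τ ^ 2) • (w * w) with hd
    have hMd : Algebra.leftMulMatrix bA d = 1 - (τ ^ 2) • U := by
      rw [hd, _root_.map_sub, _root_.map_one, hU]
      congr 1
      exact (Algebra.leftMulMatrix bA).toLinearMap.map_smul (τ ^ 2) (w * w)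
    have hdet : ((1 : Matrix _ _ F) - (τ ^ 2) • U).det ≠ 0 := by
      have : (evalRingHom τ) P = ((MX.map (evalRingHom τ)).det) := RingHom.map_det _ _
      rw [hMmap τ] at this
      have h2 : P.eval τ = ((1 : Matrix _ _ F) - (τ ^ 2) • U).det := this
      rwa [← h2]
    have hMunit : IsUnit ((1 : Matrix _ _ F) - (τ ^ 2) • U) :=
      (Matrix.isUnit_iff_isUnit_det _).mpr (isUnit_iff_ne_zero.mpr hdet)
    have hdunit : IsUnit d := by
      obtain ⟨Mu, hMu⟩ := hMunit
      set N := ((Mu⁻¹ : (Matrix (Module.Free.ChooseBasisIndex F (K ⊗[F] E)) (Module.Free.ChooseBasisIndex F (K ⊗[F] E)) F)ˣ) : Matrix (Module.Free.ChooseBasisIndex F (K ⊗[F] E)) (Module.Free.ChooseBasisIndex F (K ⊗[F] E)) F) with hN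
      have h1 : toLin bA bA ((1 - (τ ^ 2) • U) * N) = LinearMap.id := by
        rw [hN, ← hMu, Units.mul_inv, Matrix.toLin_one]
      have h2 : d * (toLin bA bA N 1) = 1 := by
        have h3 : toLin bA bA (1 - (τ ^ 2) • U) = Algebra.lmul F (K ⊗[F] E) d := by
          rw [← hMd, Algebra.leftMulMatrix_apply, Matrix.toLin_toMatrix]
        calc d * (toLin bA bA N 1)
            = (Algebra.lmul F (K ⊗[F] E) d) ((toLin bA bA N) 1) := rfl
          _ = (toLin bA bA ((1 - (τ ^ 2) • U) * N)) 1 := by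
              rw [Matrix.toLin_mul bA bA bA, h3]; rfl
          _ = 1 := by rw [h1]; rfl
      exact IsUnit.of_mul_eq_one _ h2
    have h3 : toLin bA bA (1 - (τ ^ 2) • U) = Algebra.lmul F (K ⊗[F] E) d := by
      rw [← hMd, Algebra.leftMulMatrix_apply, Matrix.toLin_toMatrix]
    -- Cayley transform units
    have hfact : ((1 : K ⊗[F] E) + τ • w) * (1 - τ • w) = d := by
      rw [hd]
      have : (τ • w) * (τ • w) = (τ ^ 2) • (w * w) := by
        rw [smul_mul_smul_comm, pow_two]
      rw [← this]
      ring
    have hcan : IsUnit (((1 : K ⊗[F] E) + τ • w) * (1 - τ • w)) := hfact ▸ hdunit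
    have hu1 : IsUnit ((1 : K ⊗[F] E) + τ • w) := isUnit_of_mul_isUnit_left hcan
    have hu2 : IsUnit ((1 : K ⊗[F] E) - τ • w) := isUnit_of_mul_isUnit_right hcan
    set u₁ := hu1.unit with hu₁
    set u₂ := hu2.unit with hu₂
    have hu1v : (u₁ : K ⊗[F] E) = 1 + τ • w := hu1.unit_spec
    have hu2v : (u₂ : K ⊗[F] E) = 1 - τ • w := hu2.unit_spec
    have hσ1 : σ' ((1 : K ⊗[F] E) + τ • w) = 1 - τ • w := by
      rw [map_add, _root_.map_one, _root_.map_smul, hσw, smul_neg, ← sub_eq_add_neg]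
    have hσ2 : σ' ((1 : K ⊗[F] E) - τ • w) = 1 + τ • w := by
      rw [map_sub, _root_.map_one, _root_.map_smul, hσw, smul_neg, sub_neg_eq_add]
    have hmap1 : Units.map σ'.toRingHom.toMonoidHom u₁ = u₂ := by
      ext
      rw [Units.coe_map]
      show σ' (u₁ : K ⊗[F] E) = (u₂ : K ⊗[F] E)
      rw [hu1v, hu2v, hσ1]
    have hmap2 : Units.map σ'.toRingHom.toMonoidHom u₂ = u₁ := by
      ext
      rw [Units.coe_map]
      show σ' (u₂ : K ⊗[F] E) = (u₁ : K ⊗[F] E)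
      rw [hu1v, hu2v, hσ2]
    set x : (K ⊗[F] E)ˣ := u₁ * u₂⁻¹ with hx
    have hxmem : x ∈ normOneGroup σ' := by
      have : normMap σ' x = 1 := by
        rw [normMap, MonoidHom.mul_apply, MonoidHom.id_apply, hx, _root_.map_mul, map_inv,
          hmap1, hmap2]
        group
      exact this
    have hxinvmem : x⁻¹ ∈ normOneGroup σ' := (normOneGroup σ').inv_mem hxmem
    have hxS : (x : K ⊗[F] E) ∈ S := Submodule.subset_span ⟨x, hxmem, rfl⟩
    have hxiS : ((x⁻¹ : (K ⊗[F] E)ˣ) : K ⊗[F] E) ∈ S :=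
      Submodule.subset_span ⟨x⁻¹, hxinvmem, rfl⟩
    set i₁ : K ⊗[F] E := ((u₁⁻¹ : (K ⊗[F] E)ˣ) : K ⊗[F] E) with hi₁
    set i₂ : K ⊗[F] E := ((u₂⁻¹ : (K ⊗[F] E)ˣ) : K ⊗[F] E) with hi₂
    have e₁ : ((1 : K ⊗[F] E) + τ • w) * i₁ = 1 := by rw [← hu1v, hi₁]; exact u₁.mul_inv
    have e₂ : ((1 : K ⊗[F] E) - τ • w) * i₂ = 1 := by rw [← hu2v, hi₂]; exact u₂.mul_inv
    have hxv : (x : K ⊗[F] E) = (1 + τ • w) * i₂ := by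
      rw [hx, Units.val_mul, hu1v, hi₂]
    have hxiv : ((x⁻¹ : (K ⊗[F] E)ˣ) : K ⊗[F] E) = (1 - τ • w) * i₁ := by
      rw [hx, _root_.mul_inv_rev, inv_inv, Units.val_mul, hu2v, hi₁]
    set z : K ⊗[F] E := (x : K ⊗[F] E) - ((x⁻¹ : (K ⊗[F] E)ˣ) : K ⊗[F] E) with hz
    have hzS : z ∈ S := S.sub_mem hxS hxiS
    set q : K ⊗[F] E := w * (i₁ * i₂) with hq
    have hzq : z = algebraMap F (K ⊗[F] E) (4 * τ) * q := by
      apply hcan.mul_left_cancel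
      rw [hz, hxv, hxiv, hq]
      have hsm : τ • w = algebraMap F (K ⊗[F] E) τ * w := Algebra.smul_def τ w
      have hmm : algebraMap F (K ⊗[F] E) (4 * τ) =
          4 * algebraMap F (K ⊗[F] E) τ := by
        rw [_root_.map_mul, map_ofNat]
      rw [hsm] at e₁ e₂ ⊢
      rw [hmm]
      set c := algebraMap F (K ⊗[F] E) τ
      linear_combination
        (-((1:K ⊗[F] E)-c*w)^2 - 4*c*w*((1:K ⊗[F] E)-c*w)*i₂) * e₁
        + (((1:K ⊗[F] E)-c*w)^2) * e₂
    have h4τ : (4 * τ : F) ≠ 0 := by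
      have h2 : (4 : F) = 2 * 2 := by norm_num
      exact mul_ne_zero (h2 ▸ mul_ne_zero hchar hchar) hτ0
    have hqS : q ∈ S := by
      have hq2 : (algebraMap F K ((4 * τ)⁻¹)) • z = q := by
        rw [hzq, Algebra.smul_def, ← IsScalarTower.algebraMap_apply F K (K ⊗[F] E),
          ← mul_assoc, ← _root_.map_mul, inv_mul_cancel₀ h4τ, _root_.map_one, one_mul]
      exact hq2 ▸ S.smul_mem _ hzS
    set v : K ⊗[F] E := ee * (i₁ * i₂) with hv
    have hvS : v ∈ S := by
      have hq3 : δi • q = v := by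
        rw [hq, hv, ← smul_mul_assoc]
        congr 1
        rw [hw, hee, TensorProduct.smul_tmul', smul_eq_mul, mul_comm δi δ, hδi]
      exact hq3 ▸ S.smul_mem δi hqS
    have hφv : φ v = 0 := hφS v hvS
    have hdv : d * v = ee := by
      have : d * v = ee * ((((1 : K ⊗[F] E) + τ • w) * i₁) * (((1 : K ⊗[F] E) - τ • w) * i₂)) := by
        rw [← hfact, hv]; ring
      rw [this, e₁, e₂, one_mul, mul_one]
    rw [evalΨ τ]
    have hadj := Matrix.adjugate_mul ((1 : Matrix _ _ F) - (τ ^ 2) • U)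
    have h5 : toLin bA bA (adjugate ((1 : Matrix _ _ F) - (τ ^ 2) • U)) ee
        = ((1 : Matrix _ _ F) - (τ ^ 2) • U).det • v := by
      have h6 := congrArg (toLin bA bA) hadj
      rw [Matrix.toLin_mul bA bA bA, h3] at h6
      have h7 := congrArg (fun g : (K ⊗[F] E) →ₗ[F] (K ⊗[F] E) => g v) h6
      simp only [LinearMap.comp_apply] at h7
      have h8 : (Algebra.lmul F (K ⊗[F] E) d) v = ee := hdv
      rw [h8] at h7
      rw [h7, LinearEquiv.map_smul, Matrix.toLin_one]
      rfl
    rw [h5, φ.map_smul, hφv, smul_eq_mul, mul_zero]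
  -- conclusion
  have hΨ0 : Ψ = 0 := by
    apply Polynomial.eq_zero_of_infinite_isRoot
    apply Set.Infinite.mono ?_ hTinf
    intro τ hτ
    exact keyT τ hτ
  have hcon : φ ee = 0 := by
    have h9 := evalΨ 0
    rw [hΨ0] at h9
    have h0sq : ((0 : F) ^ 2) • U = 0 := by
      rw [pow_two, mul_zero, zero_smul]
    rw [h0sq, sub_zero, Matrix.adjugate_one, Matrix.toLin_one] at h9
    simpa using h9.symm
  exact hφe hcon

end AuxSpan
section AuxTrace

variable {F K E : Type} [Field F] [CommRing K] [Algebra F K]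
  [CommRing E] [Algebra F E] [Module.Finite F E]

lemma trace_tmul_one (x : E) :
    Algebra.trace K (K ⊗[F] E) ((1 : K) ⊗ₜ[F] x) = algebraMap F K (Algebra.trace F E x) := by
  classical
  set bE := Module.Free.chooseBasis F E with hbE
  set bKA : Module.Basis _ K (K ⊗[F] E) := bE.baseChange K with hbKA
  rw [Algebra.trace_eq_matrix_trace bKA, Algebra.trace_eq_matrix_trace bE,
    Matrix.trace, Matrix.trace, map_sum]
  refine Finset.sum_congr rfl fun i _ => ?_
  rw [Matrix.diag_apply, Matrix.diag_apply, Algebra.leftMulMatrix_eq_repr_mul,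
    Algebra.leftMulMatrix_eq_repr_mul]
  rw [hbKA, Module.Basis.baseChange_apply, Algebra.TensorProduct.tmul_mul_tmul, one_mul,
    Module.Basis.baseChange_repr_tmul]
  rw [Algebra.algebraMap_eq_smul_one]

lemma traceKE_nondeg (hK2 : Module.finrank F K = 2)
    (hEet : ∀ x : E, x ≠ 0 → ∃ y : E, Algebra.trace F E (x * y) ≠ 0)
    (ε : K ⊗[F] E) (h : ∀ u : K ⊗[F] E, Algebra.trace K (K ⊗[F] E) (ε * u) = 0) :
    ε = 0 := by
  classical
  haveI : Module.Finite F K := Module.finite_of_finrank_eq_succ (n := 1) (by rw [hK2])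
  set bE := Module.Free.chooseBasis F E with hbE
  set bK := Module.Free.chooseBasis F K with hbK
  set bKA : Module.Basis _ K (K ⊗[F] E) := bE.baseChange K with hbKA
  set G : _ → _ → F := fun i j => Algebra.trace F E (bE i * bE j) with hG
  set kvec : _ → K := fun i => bKA.repr ε i with hkvec
  have hrepr : ∑ i, kvec i • bKA i = ε := bKA.sum_repr ε
  have hKlin : ∀ j, ∑ i, kvec i * algebraMap F K (G i j) = 0 := by
    intro j
    have h0 := h (bKA j)
    rw [← hrepr, Finset.sum_mul] at h0
    have h1 : ∀ i, (kvec i • bKA i) * bKA j = kvec i • ((1 : K) ⊗ₜ[F] (bE i * bE j)) := by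
      intro i
      rw [smul_mul_assoc, hbKA, Module.Basis.baseChange_apply, Module.Basis.baseChange_apply,
        Algebra.TensorProduct.tmul_mul_tmul, one_mul]
    rw [Finset.sum_congr rfl (fun i _ => h1 i), map_sum] at h0
    rw [← h0]
    refine Finset.sum_congr rfl fun i _ => ?_
    rw [LinearMap.map_smul, smul_eq_mul, trace_tmul_one]
  set c : _ → _ → F := fun s i => bK.repr (kvec i) s with hc
  have hcoef : ∀ s j, ∑ i, c s i * G i j = 0 := by
    intro s j
    have h2 : ∑ t, (∑ i, c t i * G i j) • bK t = 0 := by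
      have h3 : ∀ i, kvec i * algebraMap F K (G i j)
          = ∑ t, (c t i * G i j) • bK t := by
        intro i
        conv_lhs => rw [← bK.sum_repr (kvec i)]
        rw [Finset.sum_mul]
        refine Finset.sum_congr rfl fun t _ => ?_
        rw [smul_mul_assoc, ← Algebra.commutes (G i j) (bK t), ← Algebra.smul_def,
          smul_smul]
      have h4 := hKlin j
      rw [Finset.sum_congr rfl (fun i _ => h3 i), Finset.sum_comm] at h4
      rw [← h4]
      exact Finset.sum_congr rfl fun t _ => by rw [Finset.sum_smul]
    have h5 := Fintype.linearIndependent_iff.mp bK.linearIndependent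
      (fun t => ∑ i, c t i * G i j) h2
    exact h5 s
  have hes : ∀ s, ∑ i, c s i • bE i = 0 := by
    intro s
    by_contra hnz
    obtain ⟨y, hy⟩ := hEet _ hnz
    apply hy
    have h6 : (∑ i, c s i • bE i) * y = ∑ i, c s i • (bE i * y) := by
      rw [Finset.sum_mul]
      exact Finset.sum_congr rfl fun i _ => smul_mul_assoc _ _ _
    rw [h6, map_sum]
    have h7 : ∀ i, Algebra.trace F E (c s i • (bE i * y)) = c s i * Algebra.trace F E (bE i * y) := by
      intro i
      rw [LinearMap.map_smul, smul_eq_mul]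
    rw [Finset.sum_congr rfl (fun i _ => h7 i)]
    have h8 : ∀ i, Algebra.trace F E (bE i * y) = ∑ j, bE.repr y j * G i j := by
      intro i
      conv_lhs => rw [← bE.sum_repr y]
      rw [Finset.mul_sum, map_sum]
      refine Finset.sum_congr rfl fun j _ => ?_
      rw [mul_smul_comm, LinearMap.map_smul, smul_eq_mul]
    have h9 : ∑ i, c s i * Algebra.trace F E (bE i * y)
        = ∑ j, bE.repr y j * (∑ i, c s i * G i j) := by
      rw [Finset.sum_congr rfl (fun i _ => by rw [h8 i, Finset.mul_sum])]
      rw [Finset.sum_comm]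
      refine Finset.sum_congr rfl fun j _ => ?_
      rw [Finset.mul_sum]
      exact Finset.sum_congr rfl fun i _ => by ring
    rw [h9]
    exact Finset.sum_eq_zero fun j _ => by rw [hcoef s j, mul_zero]
  have hc0 : ∀ s i, c s i = 0 := by
    intro s i
    exact Fintype.linearIndependent_iff.mp bE.linearIndependent _ (hes s) i
  have hk0 : ∀ i, kvec i = 0 := by
    intro i
    have := bK.sum_repr (kvec i)
    rw [← this]
    refine Finset.sum_eq_zero fun t _ => ?_
    rw [show bK.repr (kvec i) t = c t i from rfl, hc0 t i, zero_smul]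
  rw [← hrepr]
  exact Finset.sum_eq_zero fun i _ => by rw [hk0 i, zero_smul]

end AuxTrace
section AuxKey

variable {F K E V : Type} [Field F] [Infinite F] [CommRing K] [Algebra F K]
  [CommRing E] [Algebra F E] [AddCommGroup V] [Module K V] [Module.Finite F E]

lemma normRel_of_two_compat (hchar : (2 : F) ≠ 0)
    (hK2 : Module.finrank F K = 2)
    (hKet : ∀ x : K, x ≠ 0 → ∃ y : K, Algebra.trace F K (x * y) ≠ 0)
    {conj : K →ₐ[F] K} (hconj : ∀ x, conj (conj x) = x)
    (hfix : ∀ x : K, conj x = x ↔ ∃ a : F, algebraMap F K a = x)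
    (hEet : ∀ x : E, x ≠ 0 → ∃ y : E, Algebra.trace F E (x * y) ≠ 0)
    {B : V → V → K} {lam lam' : Eˣ} {r r' : (K ⊗[F] E) ≃ₗ[K] V}
    {b : EmbType F K E V conj B}
    (hiso : IsIsometryTo F K E V conj B lam r)
    (hiso' : IsIsometryTo F K E V conj B lam' r')
    (hint : ∀ (x : normOneGroup (tensorConj conj)) (v : K ⊗[F] E),
      (b.val x) (r v) = r (x.val.val * v))
    (hint' : ∀ (x : normOneGroup (tensorConj conj)) (v : K ⊗[F] E),
      (b.val x) (r' v) = r' (x.val.val * v)) :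
    ∃ y : (K ⊗[F] E)ˣ,
      Algebra.TensorProduct.includeRight ((lam : Eˣ) : E)
        = Algebra.TensorProduct.includeRight ((lam' : Eˣ) : E)
          * ((y : K ⊗[F] E) * tensorConj conj (y : K ⊗[F] E)) := by
  set t : (K ⊗[F] E) ≃ₗ[K] (K ⊗[F] E) := r.trans r'.symm with ht
  have hcomm1 : ∀ (x : normOneGroup (tensorConj conj)) (v : K ⊗[F] E),
      t (x.val.val * v) = x.val.val * t v := by
    intro x v
    have h1 : t (x.val.val * v) = r'.symm ((b.val x) (r v)) := by
      rw [hint x v]; rfl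
    have h2 : (b.val x) (r v) = r' (x.val.val * t v) := by
      have h3 : r v = r' (t v) := (r'.apply_symm_apply (r v)).symm
      rw [h3, hint' x]
    rw [h1, h2, r'.symm_apply_apply]
  have hcommAll : ∀ (z v : K ⊗[F] E), t (z * v) = z * t v := by
    intro z v
    set Z : Submodule K (K ⊗[F] E) :=
      { carrier := {z | t (z * v) = z * t v}
        add_mem' := fun {p} {q} hp hq => by
          simp only [Set.mem_setOf_eq] at *
          rw [add_mul, map_add, hp, hq, add_mul]
        zero_mem' := by simp
        smul_mem' := fun k {p} hp => by
          simp only [Set.mem_setOf_eq] at *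
          rw [smul_mul_assoc, map_smul, hp, smul_mul_assoc] } with hZ
    have hle : Submodule.span K (Units.val ''
        ((normOneGroup (tensorConj conj) : Subgroup (K ⊗[F] E)ˣ) : Set (K ⊗[F] E)ˣ)) ≤ Z := by
      rw [Submodule.span_le]
      rintro _ ⟨x, hx, rfl⟩
      exact hcomm1 ⟨x, hx⟩ v
    rw [span_normOne_top hchar hK2 hKet conj hconj hfix, top_le_iff] at hle
    have : z ∈ Z := by rw [hle]; trivial
    exact this
  set c : K ⊗[F] E := t 1 with hc
  have hmul : ∀ z, t z = z * c := fun z => by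
    conv_lhs => rw [← mul_one z]
    rw [hcommAll z 1]
  have hcu : IsUnit c := by
    set z₀ : K ⊗[F] E := r.symm (r' 1) with hz₀
    have h1 : t z₀ = 1 := by
      rw [ht, hz₀]
      show r'.symm (r (r.symm (r' 1))) = 1
      rw [r.apply_symm_apply, r'.symm_apply_apply]
    have h2 : z₀ * c = 1 := by rw [← hmul z₀, h1]
    exact IsUnit.of_mul_eq_one (a := c) z₀ (by rw [mul_comm, h2])
  have hisot : ∀ u : K ⊗[F] E,
      hermFormOf conj (Algebra.TensorProduct.includeRight ((lam' : Eˣ) : E)) (u * c) c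
        = hermFormOf conj (Algebra.TensorProduct.includeRight ((lam : Eˣ) : E)) u 1 := by
    intro u
    have h1 := hiso' (t u) (t 1)
    have h2 : r' (t u) = r u := r'.apply_symm_apply (r u)
    have h3 : r' (t 1) = r 1 := r'.apply_symm_apply (r 1)
    rw [h2, h3, hiso u 1, hmul u, ← hc] at h1
    exact h1.symm
  have hker : ∀ u : K ⊗[F] E,
      Algebra.trace K (K ⊗[F] E)
        ((Algebra.TensorProduct.includeRight ((lam' : Eˣ) : E) * (c * tensorConj conj c)
          - Algebra.TensorProduct.includeRight ((lam : Eˣ) : E)) * u) = 0 := by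
    intro u
    have h1 := hisot u
    unfold hermFormOf at h1
    rw [_root_.map_one, mul_one] at h1
    have h2 : (Algebra.TensorProduct.includeRight ((lam' : Eˣ) : E) * (c * tensorConj conj c)
          - Algebra.TensorProduct.includeRight ((lam : Eˣ) : E)) * u
        = Algebra.TensorProduct.includeRight ((lam' : Eˣ) : E) * (u * c) * tensorConj conj c
          - Algebra.TensorProduct.includeRight ((lam : Eˣ) : E) * u := by ring
    rw [h2, map_sub, h1, sub_self]
  have hz := traceKE_nondeg hK2 hEet _ hker
  rw [sub_eq_zero] at hz
  exact ⟨hcu.unit, by rw [IsUnit.unit_spec, ← hz]⟩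

end AuxKey

/-- There is a natural bijection between the set
`{[λ] ∈ E×/N_{K_E/E}(K_E×) : V_{E,λ} ≅ V}` and the set of admissible embeddings
`K_E¹ → U(V)` modulo `U(V)`-conjugation, sending `[λ]` to the class of
`x ↦ r ∘ M_x ∘ r⁻¹` for any isometry `r : V_{E,λ} → V`. -/
theorem stmt16 (F K E V : Type) [Field F] [Infinite F] [CommRing K] [Algebra F K]
    [CommRing E] [Algebra F E] [AddCommGroup V] [Module K V] (n : ℕ)
    (hchar : (2 : F) ≠ 0)
    (hK2 : Module.finrank F K = 2)
    (hKet : ∀ x : K, x ≠ 0 → ∃ y : K, Algebra.trace F K (x * y) ≠ 0)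
    (conj : K →ₐ[F] K)
    (hconj : ∀ x, conj (conj x) = x)
    (hfix : ∀ x : K, conj x = x ↔ ∃ a : F, algebraMap F K a = x)
    [Module.Finite F E] (hEn : Module.finrank F E = n)
    (hEet : ∀ x : E, x ≠ 0 → ∃ y : E, Algebra.trace F E (x * y) ≠ 0)
    (B : V → V → K)
    (hherm : ∀ x y, B x y = conj (B y x))
    (haddl : ∀ x x' y, B (x + x') y = B x y + B x' y)
    (hsmull : ∀ (a : K) (x y : V), B (a • x) y = a * B x y)
    (hnd : ∀ x : V, x ≠ 0 → ∃ y, B x y ≠ 0)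
    (hVn : Module.finrank K V = n) :
    ∃ Φ : Quot (normRel F K E V conj B) ≃ Quot (conjRel F K E V conj B),
      ∀ (a : ReprType F K E V conj B) (b : EmbType F K E V conj B),
        Φ (Quot.mk _ a) = Quot.mk _ b ↔
          ∃ r : (K ⊗[F] E) ≃ₗ[K] V, IsIsometryTo F K E V conj B a.val r ∧
            ∀ (x : normOneGroup (tensorConj conj)) (v : K ⊗[F] E),
              (b.val x) (r v) = r (x.val.val * v) := by
  classical
  have hfc : ∀ a : ReprType F K E V conj B, Compat conj B a (stdEmb conj B a) :=
    compat_stdEmb conj B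
  have hwd : ∀ a a' : ReprType F K E V conj B, normRel F K E V conj B a a' →
      Quot.mk (conjRel F K E V conj B) (stdEmb conj B a)
        = Quot.mk (conjRel F K E V conj B) (stdEmb conj B a') := by
    intro a a' h
    exact Quot.sound (conjRel_of_compat conj B
      (compat_of_normRel conj B h (hfc a)) (hfc a'))
  set Φ0 : Quot (normRel F K E V conj B) → Quot (conjRel F K E V conj B) :=
    Quot.lift (fun a => Quot.mk _ (stdEmb conj B a)) hwd with hΦ0
  have hkey : ∀ (a : ReprType F K E V conj B) (b : EmbType F K E V conj B),
      (Quot.mk (conjRel F K E V conj B) (stdEmb conj B a) = Quot.mk _ b)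
        ↔ Compat conj B a b := by
    intro a b
    constructor
    · intro h
      exact compat_of_conjRel conj B (hfc a)
        ((Equivalence.eqvGen_iff (conjRel_equivalence conj B)).mp (Quot.eqvGen_exact h))
    · intro h
      exact Quot.sound (conjRel_of_compat conj B (hfc a) h)
  have hinj : Function.Injective Φ0 := by
    intro qa qa'
    obtain ⟨a, rfl⟩ := Quot.exists_rep qa
    obtain ⟨a', rfl⟩ := Quot.exists_rep qa'
    intro h
    have hcab : Compat conj B a (stdEmb conj B a') := (hkey a (stdEmb conj B a')).mp h
    obtain ⟨r, hiso, hint⟩ := hcab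
    obtain ⟨r', hiso', hint'⟩ := hfc a'
    obtain ⟨y, hy⟩ := normRel_of_two_compat hchar hK2 hKet hconj hfix hEet
      hiso hiso' hint hint'
    exact (Quot.sound (⟨y, hy⟩ : normRel F K E V conj B a' a)).symm
  have hsurj : Function.Surjective Φ0 := by
    intro qb
    obtain ⟨b, rfl⟩ := Quot.exists_rep qb
    obtain ⟨lam, r, hiso, hint⟩ := b.2
    refine ⟨Quot.mk _ ⟨lam, r, hiso⟩, (hkey _ b).mpr ⟨r, hiso, hint⟩⟩
  refine ⟨Equiv.ofBijective Φ0 ⟨hinj, hsurj⟩, fun a b => ?_⟩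
  exact hkey a b
end

section
/- (Unique extension of a torus morphism to the étale algebra.) Let F be an infinite field of characteristic not 2, K/F a quadratic étale algebra, E, E′ étale F-algebras of degree n, and F̄ an algebraic closure of F. Suppose T : K_{E′} ⊗_F F̄ → K_E ⊗_F F̄ is an invertible F̄-linear map such that for every x ∈ K_E¹ there exists τ(x) ∈ K_{E′}¹ with T ∘ (M_{τ(x)} ⊗ id) ∘ T⁻¹ = M_x ⊗ id. Then for every x ∈ K_E there exists a unique τ(x) ∈ K_{E′} with T ∘ (M_{τ(x)} ⊗ id) ∘ T⁻¹ = M_x ⊗ id. -/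
open scoped TensorProduct


/-- Multiplication by `z`, as an `F`-linear endomorphism. -/
noncomputable def mulEnd (F A : Type) [Field F] [CommRing A] [Algebra F A] (z : A) :
    A →ₗ[F] A :=
  (Algebra.lmul F A z : Module.End F A)


section Aux

lemma finite_nonunit {F E : Type} [Field F] [CommRing E] [Algebra F E] [Module.Finite F E]
    (z : E) : {c : F | ¬ IsUnit (z - algebraMap F E c)}.Finite := by
  have hfd : FiniteDimensional F E := ‹_›
  set f : Module.End F E := Algebra.lmul F E z with hf
  have hint : IsIntegral F f := Algebra.IsIntegral.isIntegral f
  have hmp : minpoly F f ≠ 0 := minpoly.ne_zero hint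
  refine (Polynomial.finite_setOf_isRoot hmp).subset ?_
  intro c hc
  simp only [Set.mem_setOf_eq] at hc ⊢
  rw [← Module.End.hasEigenvalue_iff_isRoot, Module.End.hasEigenvalue_iff,
    Module.End.eigenspace_def]
  intro hker
  apply hc
  -- multiplication by z - c is injective hence surjective
  have hinj : Function.Injective (Algebra.lmul F E (z - algebraMap F E c)) := by
    have : Algebra.lmul F E (z - algebraMap F E c) = f - c • 1 := by
      ext v
      simp [hf, sub_mul, Algebra.smul_def, Algebra.commutes]
    rw [this, ← LinearMap.ker_eq_bot]
    exact hker
  have hsurj := (LinearMap.injective_iff_surjective).mp hinj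
  obtain ⟨y, hy⟩ := hsurj 1
  exact IsUnit.of_mul_eq_one y (by simpa [Algebra.lmul, sub_mul] using hy)

lemma finite_sq_preimage {F : Type} [Field F] {C : Set F} (hC : C.Finite) {a : F} (ha : a ≠ 0) :
    {s : F | s^2 * a ∈ C}.Finite := by
  have : {s : F | s^2 * a ∈ C} ⊆ ⋃ c ∈ C, {s : F | s^2 * a = c} := by
    intro s hs; simp only [Set.mem_iUnion]; exact ⟨_, hs, rfl⟩
  refine (Set.Finite.biUnion hC fun c _ => ?_).subset this
  have hp : (Polynomial.C a * Polynomial.X^2 - Polynomial.C c : Polynomial F) ≠ 0 := by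
    intro h
    have := congrArg (fun p => Polynomial.coeff p 2) h
    simp [Polynomial.coeff_C] at this
    exact ha this
  refine (Polynomial.finite_setOf_isRoot hp).subset ?_
  intro s hs
  simp only [Set.mem_setOf_eq] at hs ⊢
  have hs' : a * s^2 = c := by rw [mul_comm]; exact hs
  simp [Polynomial.IsRoot, hs']



lemma resolvent_mem {F A : Type} [Field F] [CommRing A] [Algebra F A] [Module.Finite F A]
    (S : Subalgebra F A) (z : A) (Λ : Set F) (hΛ : Λ.Infinite)
    (h : ∀ lam ∈ Λ, ∃ g, (z - algebraMap F A lam) * g = 1 ∧ g ∈ S) : z ∈ S := by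
  classical
  have hfd : FiniteDimensional F A := ‹_›
  by_cases hA : Subsingleton A
  · exact (Subsingleton.elim z 0) ▸ S.zero_mem
  have : Nontrivial A := not_subsingleton_iff_nontrivial.mp hA
  -- choice of resolvents
  have h' : ∀ lam : F, ∃ g, lam ∈ Λ → (z - algebraMap F A lam) * g = 1 ∧ g ∈ S := by
    intro lam
    by_cases hl : lam ∈ Λ
    · obtain ⟨g, hg⟩ := h lam hl; exact ⟨g, fun _ => hg⟩
    · exact ⟨0, fun hc => absurd hc hl⟩
  choose w hw using h'
  have hw1 : ∀ lam ∈ Λ, (z - algebraMap F A lam) * w lam = 1 := fun lam hl => (hw lam hl).1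
  have hwS : ∀ lam ∈ Λ, w lam ∈ S := fun lam hl => (hw lam hl).2
  -- injectivity on Λ
  have hinj : Set.InjOn w Λ := by
    intro l1 h1 l2 h2 heq
    by_contra hne
    have e1 := hw1 l1 h1
    have e2 := hw1 l2 h2
    rw [heq] at e1
    have : algebraMap F A (l2 - l1) * w l2 = 0 := by
      rw [map_sub]; rw [sub_mul]
      rw [show (algebraMap F A l2) * w l2 = z * w l2 - 1 by
        rw [← e2]; ring]
      rw [show (algebraMap F A l1) * w l2 = z * w l2 - 1 by
        rw [← e1]; ring]
      ring
    have hz : w l2 = 0 := by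
      have h21 : (l2 - l1) ≠ 0 := sub_ne_zero.mpr (fun hh => hne hh.symm)
      have h2 := congrArg (fun t => algebraMap F A (l2 - l1)⁻¹ * t) this
      simp only [mul_zero] at h2
      rw [← mul_assoc, ← map_mul, inv_mul_cancel₀ h21, map_one, one_mul] at h2
      exact h2
    rw [hz, mul_zero] at e2
    exact one_ne_zero e2.symm
  -- extract linearly independent spanning subset
  obtain ⟨B, hBsub, hBspan, hBli⟩ := exists_linearIndependent F (w '' Λ)
  have hBfin : B.Finite := hBli.setFinite
  -- pick fresh λ₀
  have hpre : (Λ ∩ w ⁻¹' B).Finite := by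
    apply Set.Finite.of_finite_image (hBfin.subset ?_) (hinj.mono Set.inter_subset_left)
    rintro _ ⟨s, ⟨_, hs2⟩, rfl⟩; exact hs2
  obtain ⟨lam0, hlam0⟩ := (hΛ.diff hpre).nonempty
  have hlam0Λ : lam0 ∈ Λ := hlam0.1
  have hlam0B : w lam0 ∉ B := fun hc => hlam0.2 ⟨hlam0Λ, hc⟩
  -- μ : pre-image function for elements of B
  have hμ : ∀ a : A, ∃ m : F, a ∈ B → m ∈ Λ ∧ w m = a := by
    intro a
    by_cases ha : a ∈ B
    · obtain ⟨m, hm, hma⟩ := hBsub ha; exact ⟨m, fun _ => ⟨hm, hma⟩⟩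
    · exact ⟨0, fun hc => absurd hc ha⟩
  choose μ hμ using hμ
  -- expansion of w lam0 over B
  have hmem : w lam0 ∈ Submodule.span F B := by
    rw [hBspan]; exact Submodule.subset_span ⟨lam0, hlam0Λ, rfl⟩
  obtain ⟨c, hcsub, hcsum⟩ := Submodule.mem_span_set.mp hmem
  have hcsum' : ∑ a ∈ c.support, c a • a = w lam0 := hcsum
  -- key pointwise identity
  have hkey : ∀ a ∈ c.support, (z - algebraMap F A lam0) * a = 1 + (μ a - lam0) • a := by
    intro a ha
    have haB : a ∈ B := hcsub ha
    obtain ⟨hmΛ, hma⟩ := hμ a haB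
    have := hw1 (μ a) hmΛ
    rw [hma] at this
    calc (z - algebraMap F A lam0) * a
        = (z - algebraMap F A (μ a)) * a + (algebraMap F A (μ a) - algebraMap F A lam0) * a := by
          ring
      _ = 1 + (μ a - lam0) • a := by
          rw [this, ← map_sub, Algebra.smul_def]
  -- master identity
  have hmaster : (1 : A) = (∑ a ∈ c.support, c a) • (1 : A)
      + ∑ a ∈ c.support, (c a * (μ a - lam0)) • a := by
    have h0 : (1 : A) = (z - algebraMap F A lam0) * ∑ a ∈ c.support, c a • a := by
      rw [hcsum']; exact (hw1 lam0 hlam0Λ).symm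
    rw [Finset.mul_sum] at h0
    calc (1 : A) = ∑ a ∈ c.support, (z - algebraMap F A lam0) * (c a • a) := h0
      _ = ∑ a ∈ c.support, (c a • (1:A) + (c a * (μ a - lam0)) • a) := by
          refine Finset.sum_congr rfl fun a ha => ?_
          rw [mul_smul_comm, hkey a ha, smul_add, smul_smul]
      _ = _ := by
          rw [Finset.sum_add_distrib, ← Finset.sum_smul]
  -- sum of coefficients ≠ 1
  have hS1 : (∑ a ∈ c.support, c a) ≠ 1 := by
    intro hS1
    have hzero : ∑ a ∈ c.support, (c a * (μ a - lam0)) • a = 0 := by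
      rw [hS1, one_smul] at hmaster
      linear_combination (norm := module) hmaster.symm
    -- use linear independence
    have hli := (linearIndepOn_iff (R := F) (v := (id : A → A)) (s := B)).mp hBli
    set l : A →₀ F := Finsupp.ofSupportFinite (fun a => if a ∈ c.support then c a * (μ a - lam0) else 0)
      (Set.Finite.subset c.support.finite_toSet (by
        intro a ha
        simp only [Function.mem_support, ne_eq, ite_eq_right_iff, not_forall] at ha
        exact ha.1)) with hl
    have hlcoe : ∀ a, l a = if a ∈ c.support then c a * (μ a - lam0) else 0 := fun a => rfl
    have hlsupp : l ∈ Finsupp.supported F F B := by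
      rw [Finsupp.mem_supported]
      intro a ha
      have ha' : l a ≠ 0 := Finsupp.mem_support_iff.mp ha
      rw [hlcoe] at ha'
      by_cases hac : a ∈ c.support
      · exact hcsub hac
      · exact absurd (if_neg hac) ha'
    have hlzero : Finsupp.linearCombination F id l = 0 := by
      rw [Finsupp.linearCombination_apply, Finsupp.sum]
      rw [Finset.sum_subset (s₁ := l.support) (s₂ := c.support)]
      · rw [← hzero]
        refine Finset.sum_congr rfl fun a ha => ?_
        simp [hlcoe, ha]
      · intro a ha
        have := Finsupp.mem_support_iff.mp ha
        rw [hlcoe] at this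
        by_contra hac
        exact this (if_neg hac)
      · intro a _ ha
        simp [Finsupp.notMem_support_iff.mp ha]
    have hl0 := hli l hlsupp hlzero
    -- then all coefficients vanish, so support is empty, so sum = 0 ≠ 1
    have hcempty : ∀ a ∈ c.support, c a = 0 := by
      intro a ha
      have : l a = 0 := by rw [hl0]; rfl
      rw [hlcoe, if_pos ha] at this
      rcases mul_eq_zero.mp this with h | h
      · exact h
      · exfalso
        have haB : a ∈ B := hcsub ha
        obtain ⟨hmΛ, hma⟩ := hμ a haB
        have : μ a = lam0 := sub_eq_zero.mp h
        rw [← this, hma] at hlam0B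
        exact hlam0B haB
    have : (∑ a ∈ c.support, c a) = 0 := Finset.sum_eq_zero hcempty
    rw [this] at hS1
    exact one_ne_zero hS1.symm
  -- Now: 1 = S1•1 + Σ..., so 1 ∈ span, in fact: write 1 as combination
  set S1 := ∑ a ∈ c.support, c a with hS1def
  have hone : (1 : A) = ∑ a ∈ c.support, ((1 - S1)⁻¹ * (c a * (μ a - lam0))) • a := by
    have h10 : (1 - S1) • (1:A) = ∑ a ∈ c.support, (c a * (μ a - lam0)) • a := by
      rw [sub_smul, one_smul]
      linear_combination (norm := module) hmaster
    calc (1:A) = (1 - S1)⁻¹ • ((1-S1) • (1:A)) := by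
          rw [smul_smul, inv_mul_cancel₀ (sub_ne_zero.mpr (fun hh => hS1 hh.symm)), one_smul]
      _ = _ := by
          rw [h10, Finset.smul_sum]
          exact Finset.sum_congr rfl fun a _ => by rw [smul_smul]
  -- finally z - lam0 ∈ S
  have hfin : z - algebraMap F A lam0 ∈ S := by
    have : z - algebraMap F A lam0 = ∑ a ∈ c.support,
        ((1 - S1)⁻¹ * (c a * (μ a - lam0))) • ((z - algebraMap F A lam0) * a) := by
      calc z - algebraMap F A lam0 = (z - algebraMap F A lam0) * 1 := (mul_one _).symm
        _ = _ := by
            rw [hone, Finset.mul_sum]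
            exact Finset.sum_congr rfl fun a _ => (mul_smul_comm _ _ _)
    rw [this]
    refine Subalgebra.sum_mem S fun a ha => Subalgebra.smul_mem S ?_ _
    rw [hkey a ha]
    refine Subalgebra.add_mem S S.one_mem (Subalgebra.smul_mem S ?_ _)
    obtain ⟨hmΛ, hma⟩ := hμ a (hcsub ha)
    rw [← hma]
    exact hwS _ hmΛ
  have := Subalgebra.add_mem S hfin (S.algebraMap_mem lam0)
  simpa using this


lemma one_tmul_injective {F Fbar M : Type} [Field F] [Field Fbar] [Algebra F Fbar]
    [AddCommGroup M] [Module F M] :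
    Function.Injective (fun m : M => (1 : Fbar) ⊗ₜ[F] m) := by
  classical
  have h1 : LinearIndepOn F id ({(1:Fbar)} : Set Fbar) :=
    LinearIndepOn.singleton (R := F) (v := (id : Fbar → Fbar)) one_ne_zero
  let b := Module.Basis.extend h1
  have h1mem : (1 : Fbar) ∈ h1.extend (Set.subset_univ _) := h1.subset_extend _ rfl
  let φ : Fbar →ₗ[F] F := b.coord ⟨1, h1mem⟩
  have hφ : φ 1 = 1 := by
    have hb : b ⟨1, h1mem⟩ = (1 : Fbar) := Module.Basis.extend_apply_self h1 ⟨1, h1mem⟩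
    have : φ (b ⟨1, h1mem⟩) = 1 := by
      simp only [φ, Module.Basis.coord_apply, Module.Basis.repr_self]
      simp
    rwa [hb] at this
  intro m m' h
  have h2 := congrArg (fun t => TensorProduct.lid F M (LinearMap.rTensor M φ t)) h
  simpa [hφ] using h2

end Aux

set_option maxHeartbeats 1000000 in
/-- Unique extension of a torus morphism to the étale algebra:
if `T : K_{E′} ⊗_F F̄ → K_E ⊗_F F̄` is an invertible `F̄`-linear map such that
every multiplication operator `M_x ⊗ id` with `x ∈ K_E¹` is conjugated by `T`
from some `M_{τ(x)} ⊗ id` with `τ(x) ∈ K_{E′}¹`, then for every `x ∈ K_E` there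
is a unique `τ(x) ∈ K_{E′}` with `T ∘ (M_{τ(x)} ⊗ id) ∘ T⁻¹ = M_x ⊗ id`. -/
theorem stmt17 (F K E E' Fbar : Type) [Field F] [Infinite F]
    [CommRing K] [Algebra F K] [CommRing E] [Algebra F E] [CommRing E'] [Algebra F E']
    [Field Fbar] [Algebra F Fbar] [IsAlgClosure F Fbar] (n : ℕ)
    (hchar : (2 : F) ≠ 0)
    (hK2 : Module.finrank F K = 2)
    (hKet : ∀ x : K, x ≠ 0 → ∃ y : K, Algebra.trace F K (x * y) ≠ 0)
    (conj : K →ₐ[F] K)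
    (hconj : ∀ x, conj (conj x) = x)
    (hfix : ∀ x : K, conj x = x ↔ ∃ a : F, algebraMap F K a = x)
    [Module.Finite F E] (hEn : Module.finrank F E = n)
    (hEet : ∀ x : E, x ≠ 0 → ∃ y : E, Algebra.trace F E (x * y) ≠ 0)
    [Module.Finite F E'] (hE'n : Module.finrank F E' = n)
    (hE'et : ∀ x : E', x ≠ 0 → ∃ y : E', Algebra.trace F E' (x * y) ≠ 0)
    (T : (Fbar ⊗[F] (K ⊗[F] E')) ≃ₗ[Fbar] (Fbar ⊗[F] (K ⊗[F] E)))
    (hyp : ∀ x : (K ⊗[F] E)ˣ, x ∈ normOneGroup (tensorConj conj) →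
      ∃ t : (K ⊗[F] E')ˣ, t ∈ normOneGroup (tensorConj conj) ∧
        T.toLinearMap
            ∘ₗ LinearMap.baseChange Fbar (mulEnd F (K ⊗[F] E') (t : K ⊗[F] E'))
            ∘ₗ T.symm.toLinearMap
          = LinearMap.baseChange Fbar (mulEnd F (K ⊗[F] E) (x : K ⊗[F] E))) :
    ∀ x : K ⊗[F] E, ∃! t : K ⊗[F] E',
      T.toLinearMap
          ∘ₗ LinearMap.baseChange Fbar (mulEnd F (K ⊗[F] E') t)
          ∘ₗ T.symm.toLinearMap
        = LinearMap.baseChange Fbar (mulEnd F (K ⊗[F] E) x) := by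
  classical
  have hKfin : Module.Finite F K := Module.finite_of_finrank_pos (by rw [hK2]; norm_num)
  have hKnt : Nontrivial K := Module.nontrivial_of_finrank_pos
    (R := F) (by rw [hK2]; norm_num)
  -- the predicate
  set P : (K ⊗[F] E) → Prop := fun x => ∃ t : K ⊗[F] E',
      T.toLinearMap ∘ₗ LinearMap.baseChange Fbar (mulEnd F (K ⊗[F] E') t)
          ∘ₗ T.symm.toLinearMap
        = LinearMap.baseChange Fbar (mulEnd F (K ⊗[F] E) x) with hPdef
  have hmulEnd : ∀ (R A : Type) [Field R] [CommRing A] [Algebra R A] (z v : A),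
      mulEnd R A z v = z * v := fun R A _ _ _ z v => rfl
  -- uniqueness
  have huniq : ∀ t₁ t₂ : K ⊗[F] E',
      T.toLinearMap ∘ₗ LinearMap.baseChange Fbar (mulEnd F (K ⊗[F] E') t₁)
          ∘ₗ T.symm.toLinearMap
        = T.toLinearMap ∘ₗ LinearMap.baseChange Fbar (mulEnd F (K ⊗[F] E') t₂)
          ∘ₗ T.symm.toLinearMap → t₁ = t₂ := by
    intro t₁ t₂ h
    have h2 := LinearMap.congr_fun h (T ((1:Fbar) ⊗ₜ[F] (1 : K ⊗[F] E')))
    simp only [LinearMap.comp_apply, LinearEquiv.coe_coe, LinearEquiv.symm_apply_apply] at h2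
    have h3 := T.injective h2
    rw [LinearMap.baseChange_tmul, LinearMap.baseChange_tmul, hmulEnd, hmulEnd,
      mul_one, mul_one] at h3
    exact one_tmul_injective h3
  -- closure properties of P
  have hzero : P 0 := by
    refine ⟨0, ?_⟩
    have h0 : mulEnd F (K ⊗[F] E') 0 = 0 := map_zero (Algebra.lmul F (K ⊗[F] E'))
    have h0' : mulEnd F (K ⊗[F] E) 0 = 0 := map_zero (Algebra.lmul F (K ⊗[F] E))
    have hb0 : LinearMap.baseChange Fbar (0 : (K ⊗[F] E') →ₗ[F] (K ⊗[F] E')) = 0 :=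
      map_zero (LinearMap.baseChangeHom F Fbar (K ⊗[F] E') (K ⊗[F] E'))
    have hb0' : LinearMap.baseChange Fbar (0 : (K ⊗[F] E) →ₗ[F] (K ⊗[F] E)) = 0 :=
      map_zero (LinearMap.baseChangeHom F Fbar (K ⊗[F] E) (K ⊗[F] E))
    rw [h0, h0', hb0, hb0']
    refine LinearMap.ext fun z => ?_
    simp
  have hone : P 1 := by
    refine ⟨1, ?_⟩
    have h1 : mulEnd F (K ⊗[F] E') 1 = LinearMap.id := by ext v; simp [hmulEnd]
    have h1' : mulEnd F (K ⊗[F] E) 1 = LinearMap.id := by ext v; simp [hmulEnd]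
    rw [h1, h1', LinearMap.baseChange_id, LinearMap.baseChange_id]
    refine LinearMap.ext fun z => ?_
    simp
  have hadd : ∀ x y, P x → P y → P (x + y) := by
    rintro x y ⟨t₁, h₁⟩ ⟨t₂, h₂⟩
    refine ⟨t₁ + t₂, ?_⟩
    have e1 : mulEnd F (K ⊗[F] E') (t₁ + t₂)
        = mulEnd F (K ⊗[F] E') t₁ + mulEnd F (K ⊗[F] E') t₂ :=
      map_add (Algebra.lmul F (K ⊗[F] E')) t₁ t₂
    have e2 : mulEnd F (K ⊗[F] E) (x + y)
        = mulEnd F (K ⊗[F] E) x + mulEnd F (K ⊗[F] E) y :=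
      map_add (Algebra.lmul F (K ⊗[F] E)) x y
    rw [e1, e2, LinearMap.baseChange_add, LinearMap.add_comp, LinearMap.comp_add, h₁, h₂,
      LinearMap.baseChange_add]
  have hsmul : ∀ (r : F) x, P x → P (r • x) := by
    rintro r x ⟨t, h⟩
    refine ⟨r • t, ?_⟩
    have e1 : mulEnd F (K ⊗[F] E') (r • t) = r • mulEnd F (K ⊗[F] E') t := by
      ext v; simp [hmulEnd, smul_mul_assoc]
    have e2 : mulEnd F (K ⊗[F] E) (r • x) = r • mulEnd F (K ⊗[F] E) x := by
      ext v; simp [hmulEnd, smul_mul_assoc]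
    rw [e1, e2, LinearMap.baseChange_smul, LinearMap.baseChange_smul]
    refine LinearMap.ext fun z => ?_
    have hz := LinearMap.congr_fun h z
    simp only [LinearMap.comp_apply, LinearEquiv.coe_coe, LinearMap.smul_apply] at hz ⊢
    rw [← hz]
    exact T.toLinearMap.map_smul_of_tower r _
  have hmul : ∀ x y, P x → P y → P (x * y) := by
    rintro x y ⟨t₁, h₁⟩ ⟨t₂, h₂⟩
    refine ⟨t₁ * t₂, ?_⟩
    have e1 : mulEnd F (K ⊗[F] E') (t₁ * t₂)
        = mulEnd F (K ⊗[F] E') t₁ ∘ₗ mulEnd F (K ⊗[F] E') t₂ := by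
      ext v; simp [hmulEnd, mul_assoc]
    have e2 : mulEnd F (K ⊗[F] E) (x * y)
        = mulEnd F (K ⊗[F] E) x ∘ₗ mulEnd F (K ⊗[F] E) y := by
      ext v; simp [hmulEnd, mul_assoc]
    rw [e1, e2, LinearMap.baseChange_comp, LinearMap.baseChange_comp]
    refine LinearMap.ext fun z => ?_
    have hz₂ := LinearMap.congr_fun h₂ z
    simp only [LinearMap.comp_apply, LinearEquiv.coe_coe] at hz₂ ⊢
    have hz₂' : LinearMap.baseChange Fbar (mulEnd F (K ⊗[F] E') t₂) (T.symm z)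
        = T.symm (LinearMap.baseChange Fbar (mulEnd F (K ⊗[F] E) y) z) := by
      rw [← hz₂, LinearEquiv.symm_apply_apply]
    rw [hz₂']
    have hz₁ := LinearMap.congr_fun h₁
      (LinearMap.baseChange Fbar (mulEnd F (K ⊗[F] E) y) z)
    simp only [LinearMap.comp_apply, LinearEquiv.coe_coe] at hz₁
    exact hz₁
  -- the subalgebra of elements satisfying P
  set S : Subalgebra F (K ⊗[F] E) :=
    { carrier := setOf P
      mul_mem' := fun hx hy => hmul _ _ hx hy
      one_mem' := hone
      add_mem' := fun hx hy => hadd _ _ hx hy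
      zero_mem' := hzero
      algebraMap_mem' := fun r => by
        rw [Algebra.algebraMap_eq_smul_one]
        exact hsmul r 1 hone } with hSdef
  have hSmem : ∀ x : K ⊗[F] E, x ∈ S ↔ P x := fun x => Iff.rfl
  -- norm-one elements satisfy P
  have hN : ∀ u : (K ⊗[F] E)ˣ, u ∈ normOneGroup (tensorConj conj) → P (u : K ⊗[F] E) :=
    fun u hu => (hyp u hu).elim fun t ht => ⟨(t : K ⊗[F] E'), ht.2⟩

  -- involution facts
  set σA : (K ⊗[F] E) →ₐ[F] (K ⊗[F] E) := tensorConj conj with hσAdef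
  have hσtmul : ∀ (kk : K) (ee : E), σA (kk ⊗ₜ[F] ee) = conj kk ⊗ₜ[F] ee := by
    intro kk ee
    simp [hσAdef, tensorConj]
  have hσσ : ∀ z : K ⊗[F] E, σA (σA z) = z := by
    intro z
    induction z using TensorProduct.induction_on with
    | zero => simp
    | tmul k e => rw [hσtmul, hσtmul, hconj]
    | add p q hp hq => rw [map_add, map_add, hp, hq]
  have hmemN : ∀ (nu : (K ⊗[F] E)ˣ), (nu : K ⊗[F] E) * σA ((nu : K ⊗[F] E)) = 1 →
      nu ∈ normOneGroup σA := by
    intro nu h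
    have h1 : normMap σA nu = 1 := by
      apply Units.ext
      have heq : normMap σA nu = nu * Units.map σA.toRingHom.toMonoidHom nu := rfl
      rw [heq, Units.val_mul, Units.val_one, Units.coe_map]
      exact h
    exact MonoidHom.mem_ker.mpr h1
  -- the element δ of K
  obtain ⟨k0, hk0⟩ : ∃ k : K, k ∉ Submodule.span F ({1} : Set K) := by
    by_contra hcon
    push_neg at hcon
    have htop : Submodule.span F ({1} : Set K) = ⊤ := Submodule.eq_top_iff'.mpr hcon
    have h1 : Module.finrank F K = 1 := by
      rw [← finrank_top F K, ← htop, finrank_span_singleton ((one_ne_zero : (1 : K) ≠ 0))]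
    rw [hK2] at h1
    norm_num at h1
  set δ : K := k0 - conj k0 with hδdef
  have hδne : δ ≠ 0 := by
    intro h0
    have hkc : conj k0 = k0 := by
      have := sub_eq_zero.mp h0
      exact this.symm
    obtain ⟨α, hα⟩ := (hfix k0).mp hkc
    apply hk0
    rw [← hα, Algebra.algebraMap_eq_smul_one]
    exact Submodule.smul_mem _ _ (Submodule.mem_span_singleton_self _)
  have hδconj : conj δ = -δ := by
    rw [hδdef, map_sub, hconj]
    ring
  obtain ⟨a, ha⟩ : ∃ a : F, algebraMap F K a = δ * δ := by
    apply (hfix _).mp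
    rw [map_mul, hδconj]
    ring
  have ha0 : a ≠ 0 := by
    intro h0
    have hδ2 : δ * δ = 0 := by rw [← ha, h0, map_zero]
    obtain ⟨y, hy⟩ := hKet δ hδne
    apply hy
    have hz2 : (δ * y) * (δ * y) = 0 := by
      rw [show (δ * y) * (δ * y) = (δ * δ) * (y * y) by ring, hδ2, zero_mul]
    have hnil : IsNilpotent (Algebra.lmul F K (δ * y)) := by
      refine ⟨2, ?_⟩
      refine LinearMap.ext fun v => ?_
      show (δ * y) * ((δ * y) * v) = 0
      rw [← mul_assoc, hz2, zero_mul]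
    have htr : IsNilpotent (LinearMap.trace F K (Algebra.lmul F K (δ * y))) :=
      LinearMap.isNilpotent_trace_of_isNilpotent hnil
    have := htr.eq_zero
    rwa [show LinearMap.trace F K (Algebra.lmul F K (δ * y))
      = Algebra.trace F K (δ * y) from rfl] at this
  -- {1, δ} is a basis of K
  have hli : LinearIndependent F ![(1 : K), δ] := by
    rw [LinearIndependent.pair_iff]
    intro p q hpq
    have h2 : p • (1 : K) + q • (-δ) = 0 := by
      have := congrArg conj hpq
      rwa [map_add, map_smul, map_smul, map_one, hδconj, map_zero] at this
    have hsum : (2 * p) • (1 : K) = 0 := by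
      linear_combination (norm := module) hpq + h2
    have hp : p = 0 := by
      rcases smul_eq_zero.mp hsum with h | h
      · rcases mul_eq_zero.mp h with h' | h'
        · exact absurd h' hchar
        · exact h'
      · exact absurd h ((one_ne_zero : (1 : K) ≠ 0))
    refine ⟨hp, ?_⟩
    rw [hp, zero_smul, zero_add] at hpq
    rcases smul_eq_zero.mp hpq with h | h
    · exact h
    · exact absurd h hδne
  have hspanK : ∀ kk : K, ∃ α β : F, kk = α • (1 : K) + β • δ := by
    have hcard : Fintype.card (Fin 2) = Module.finrank F K := by simp [hK2]
    let bK : Module.Basis (Fin 2) F K := basisOfLinearIndependentOfCardEqFinrank hli hcard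
    have hbk : ⇑bK = ![(1 : K), δ] := coe_basisOfLinearIndependentOfCardEqFinrank hli hcard
    have hrange : Set.range ![(1 : K), δ] = {1, δ} := by
      simp [Matrix.range_cons, Matrix.range_empty, Set.pair_comm]
    have hspan : Submodule.span F ({1, δ} : Set K) = ⊤ := by
      rw [← hrange, ← hbk]
      exact bK.span_eq
    intro kk
    have : kk ∈ Submodule.span F ({1, δ} : Set K) := hspan ▸ Submodule.mem_top
    obtain ⟨α, β, hab⟩ := Submodule.mem_span_pair.mp this
    exact ⟨α, β, hab.symm⟩
  -- D = δ ⊗ 1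
  set D : K ⊗[F] E := δ ⊗ₜ[F] (1 : E) with hDdef
  have hD2 : D * D = algebraMap F (K ⊗[F] E) a := by
    rw [hDdef, Algebra.TensorProduct.tmul_mul_tmul, mul_one, ← ha,
      Algebra.TensorProduct.algebraMap_apply]
  have hσD : σA D = -D := by
    rw [hDdef, hσtmul, hδconj, TensorProduct.neg_tmul]
  -- the key per-(e,s) construction
  have key : ∀ (e : E) (s : F), s ≠ 0 → IsUnit (e * e - algebraMap F E (s^2 * a)) →
      ∃ g : K ⊗[F] E,
        ((1 : K) ⊗ₜ[F] (e * e) - algebraMap F (K ⊗[F] E) (s^2 * a)) * g = 1 ∧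
        g ∈ S ∧ ((1 : K) ⊗ₜ[F] e) * D * g ∈ S := by
    intro e s hs hunit
    obtain ⟨w, hw⟩ := hunit
    set r : E := ((w⁻¹ : Eˣ) : E) with hrdef
    have hwr : (e * e - algebraMap F E (s^2 * a)) * r = 1 := by
      rw [← hw, hrdef]
      exact w.mul_inv
    set v : K ⊗[F] E := (1 : K) ⊗ₜ[F] e with hvdef
    set u : K ⊗[F] E := v + algebraMap F (K ⊗[F] E) s * D with hudef
    set g : K ⊗[F] E := (1 : K) ⊗ₜ[F] r with hgdef
    have hσv : σA v = v := by rw [hvdef, hσtmul, map_one]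
    have hσg : σA g = g := by rw [hgdef, hσtmul, map_one]
    have hσu : σA u = v - algebraMap F (K ⊗[F] E) s * D := by
      rw [hudef, map_add, map_mul, hσv, hσD, AlgHom.commutes]
      ring
    have hvv : v * v = (1 : K) ⊗ₜ[F] (e * e) := by
      rw [hvdef, Algebra.TensorProduct.tmul_mul_tmul, mul_one]
    have huσu : u * σA u = (1 : K) ⊗ₜ[F] (e * e) - algebraMap F (K ⊗[F] E) (s^2 * a) := by
      rw [hσu, hudef, ← hvv, map_mul, map_pow, ← hD2]
      ring
    have hamulg : ∀ c : F, algebraMap F (K ⊗[F] E) c * g = (1 : K) ⊗ₜ[F] (algebraMap F E c * r) := by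
      intro c
      calc algebraMap F (K ⊗[F] E) c * ((1 : K) ⊗ₜ[F] r)
          = c • ((1 : K) ⊗ₜ[F] r) := (Algebra.smul_def c _).symm
        _ = (1 : K) ⊗ₜ[F] (c • r) := by rw [TensorProduct.tmul_smul]
        _ = (1 : K) ⊗ₜ[F] (algebraMap F E c * r) := by rw [Algebra.smul_def]
    have hug : ((1 : K) ⊗ₜ[F] (e * e) - algebraMap F (K ⊗[F] E) (s^2 * a)) * g = 1 := by
      rw [sub_mul, hamulg, hgdef, Algebra.TensorProduct.tmul_mul_tmul, mul_one,
        ← TensorProduct.tmul_sub, ← sub_mul, hwr]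
      rfl
    have huσug : (u * σA u) * g = 1 := by rw [huσu]; exact hug
    -- units
    have hU1a : u * (σA u * g) = 1 := by rw [← mul_assoc]; exact huσug
    have hU1b : (σA u * g) * u = 1 := by rw [mul_comm]; exact hU1a
    have hU2a : σA u * (u * g) = 1 := by
      rw [show σA u * (u * g) = (u * σA u) * g by ring]; exact huσug
    have hU2b : (u * g) * σA u = 1 := by rw [mul_comm]; exact hU2a
    set U1 : (K ⊗[F] E)ˣ := ⟨u, σA u * g, hU1a, hU1b⟩ with hU1def
    set U2 : (K ⊗[F] E)ˣ := ⟨σA u, u * g, hU2a, hU2b⟩ with hU2def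
    set nu : (K ⊗[F] E)ˣ := U1 * U2⁻¹ with hnudef
    have hnuval : (nu : K ⊗[F] E) = u * (u * g) := rfl
    have hnuinvval : ((nu⁻¹ : (K ⊗[F] E)ˣ) : K ⊗[F] E) = σA u * (σA u * g) := by
      rw [hnudef, mul_inv_rev, inv_inv]
      rfl
    have hnumem : nu ∈ normOneGroup σA := by
      apply hmemN
      rw [hnuval, map_mul, map_mul, hσg]
      rw [show u * (u * g) * (σA u * (σA u * g)) = ((u * σA u) * g) * ((u * σA u) * g) by ring,
        huσug, one_mul]
    have hP1 : P (u * (u * g)) := by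
      have := hN nu hnumem
      rwa [hnuval] at this
    have hP2 : P (σA u * (σA u * g)) := by
      have hmem2 : nu⁻¹ ∈ normOneGroup σA := (normOneGroup σA).inv_mem hnumem
      have := hN nu⁻¹ hmem2
      rwa [hnuinvval] at this
    have hS1 : u * (u * g) ∈ S := hP1
    have hS2 : σA u * (σA u * g) ∈ S := hP2
    have hvvg : (v * v) * g = 1 + algebraMap F (K ⊗[F] E) (s^2 * a) * g := by
      rw [hvv]
      linear_combination hug
    have hsum : u * (u * g) + σA u * (σA u * g)
        = 2 + 4 * (algebraMap F (K ⊗[F] E) (s^2 * a) * g) := by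
      have hexp : u * (u * g) + σA u * (σA u * g)
          = 2 * ((v * v) * g) + 2 * ((algebraMap F (K ⊗[F] E) s)^2 * ((D * D) * g)) := by
        rw [hσu, hudef]; ring
      rw [hexp, hvvg, hD2]
      rw [show (algebraMap F (K ⊗[F] E) s)^2 * (algebraMap F (K ⊗[F] E) a * g)
        = algebraMap F (K ⊗[F] E) (s^2 * a) * g by rw [map_mul, map_pow]; ring]
      ring
    have h4 : (4 : F) ≠ 0 := by
      rw [show (4 : F) = 2 * 2 by norm_num]
      exact mul_ne_zero hchar hchar
    have hgS : g ∈ S := by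
      have hmemsum : u * (u * g) + σA u * (σA u * g) ∈ S := S.add_mem hS1 hS2
      rw [hsum] at hmemsum
      have h2S : (2 : K ⊗[F] E) ∈ S := by
        rw [← map_ofNat (algebraMap F (K ⊗[F] E)) 2]
        exact S.algebraMap_mem _
      have hx : 4 * (algebraMap F (K ⊗[F] E) (s^2 * a) * g) ∈ S := by
        have := S.sub_mem hmemsum h2S
        rwa [add_sub_cancel_left] at this
      have hx2 : ((4 : F) * (s^2 * a)) • g ∈ S := by
        have heq : ((4 : F) * (s^2 * a)) • g
            = 4 * (algebraMap F (K ⊗[F] E) (s^2 * a) * g) := by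
          rw [Algebra.smul_def, map_mul, map_ofNat, mul_assoc]
        rwa [heq]
      have h4a : (4 : F) * (s^2 * a) ≠ 0 :=
        mul_ne_zero h4 (mul_ne_zero (pow_ne_zero 2 hs) ha0)
      have := S.smul_mem hx2 ((4 : F) * (s^2 * a))⁻¹
      rwa [smul_smul, inv_mul_cancel₀ h4a, one_smul] at this
    have hdiff : u * (u * g) - σA u * (σA u * g)
        = 4 * (algebraMap F (K ⊗[F] E) s * (v * D * g)) := by
      rw [hσu, hudef]; ring
    have hvDg : v * D * g ∈ S := by
      have hmemdiff := S.sub_mem hS1 hS2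
      rw [hdiff] at hmemdiff
      have heq : (4 : K ⊗[F] E) * (algebraMap F (K ⊗[F] E) s * (v * D * g))
          = ((4 : F) * s) • (v * D * g) := by
        rw [Algebra.smul_def, map_mul, map_ofNat]; ring
      rw [heq] at hmemdiff
      have h4s : (4 : F) * s ≠ 0 := mul_ne_zero h4 hs
      have := S.smul_mem hmemdiff ((4 : F) * s)⁻¹
      rwa [smul_smul, inv_mul_cancel₀ h4s, one_smul] at this
    exact ⟨g, hug, hgS, hvDg⟩
  -- instances for resolvent
  haveI hAfin : Module.Finite F (K ⊗[F] E) := inferInstance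
  -- D ∈ S
  have hDS : D ∈ S := by
    have hbad : ({0} ∪ {s : F | s^2 * a ∈ ({1} : Set F)}).Finite :=
      (Set.finite_singleton 0).union (finite_sq_preimage (Set.finite_singleton 1) ha0)
    obtain ⟨s, hsgood⟩ := (Set.Finite.infinite_compl hbad).nonempty
    have hs0 : s ≠ 0 := by
      intro h0
      exact hsgood (Or.inl (by rw [h0]; exact rfl))
    have hsa : s^2 * a ≠ 1 := by
      intro h1
      exact hsgood (Or.inr h1)
    have hunit : IsUnit ((1 : E) * (1 : E) - algebraMap F E (s^2 * a)) := by
      rw [one_mul, show (1 : E) = algebraMap F E 1 from (map_one _).symm, ← map_sub]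
      exact (isUnit_iff_ne_zero.mpr (sub_ne_zero.mpr (fun hh => hsa hh.symm))).map
        (algebraMap F E)
    obtain ⟨g, hg1, hgS, hDgS⟩ := key 1 s hs0 hunit
    have hone' : (1 : K) ⊗ₜ[F] ((1 : E) * (1 : E)) = (1 : K ⊗[F] E) := by
      rw [one_mul]
      exact (Algebra.TensorProduct.one_def).symm
    rw [hone', show (1 : K ⊗[F] E) - algebraMap F (K ⊗[F] E) (s^2 * a)
      = algebraMap F (K ⊗[F] E) (1 - s^2 * a) by rw [map_sub, map_one]] at hg1
    have hDg : algebraMap F (K ⊗[F] E) (1 - s^2 * a) * (((1 : K) ⊗ₜ[F] (1 : E)) * D * g)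
        = D := by
      rw [show ((1 : K) ⊗ₜ[F] (1 : E)) = (1 : K ⊗[F] E) from (Algebra.TensorProduct.one_def).symm]
      rw [show algebraMap F (K ⊗[F] E) (1 - s^2 * a) * ((1 : K ⊗[F] E) * D * g)
        = D * (algebraMap F (K ⊗[F] E) (1 - s^2 * a) * g) by ring, hg1, mul_one]
    have := S.smul_mem hDgS (1 - s^2 * a)
    rwa [Algebra.smul_def, hDg] at this
  -- 1 ⊗ e ∈ S for all e
  have hES : ∀ e : E, ((1 : K) ⊗ₜ[F] e) ∈ S := by
    intro e
    have hbadc : {c : F | ¬ IsUnit (e * e - algebraMap F E c)}.Finite := finite_nonunit (e * e)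
    have hbadSfin : ({0} ∪ {s : F | s^2 * a ∈ {c : F | ¬ IsUnit (e * e - algebraMap F E c)}}
        : Set F).Finite :=
      (Set.finite_singleton 0).union (finite_sq_preimage hbadc ha0)
    have hgoodinf : (({0} ∪ {s : F | s^2 * a ∈ {c : F | ¬ IsUnit (e * e - algebraMap F E c)}}
        : Set F)ᶜ).Infinite := Set.Finite.infinite_compl hbadSfin
    have hgood : ∀ s ∈ (({0} ∪ {s : F | s^2 * a ∈ {c : F | ¬ IsUnit (e * e - algebraMap F E c)}}
        : Set F)ᶜ), s ≠ 0 ∧ IsUnit (e * e - algebraMap F E (s^2 * a)) := by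
      intro s hsc
      constructor
      · intro h0
        exact hsc (Or.inl (by rw [h0]; exact rfl))
      · by_contra hcon
        exact hsc (Or.inr hcon)
    have hΛinf : ((fun s : F => s^2 * a) ''
        (({0} ∪ {s : F | s^2 * a ∈ {c : F | ¬ IsUnit (e * e - algebraMap F E c)}}
        : Set F)ᶜ)).Infinite := by
      intro hfin
      apply hgoodinf
      apply (finite_sq_preimage hfin ha0).subset
      intro s hs
      exact ⟨s, hs, rfl⟩
    have hz : (1 : K) ⊗ₜ[F] (e * e) ∈ S := by
      apply resolvent_mem S _ _ hΛinf
      intro lam hlam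
      obtain ⟨s, hsgood, hseq⟩ := hlam
      obtain ⟨hs0, hsunit⟩ := hgood s hsgood
      rw [← hseq]
      obtain ⟨g, hg1, hgS, _⟩ := key e s hs0 hsunit
      exact ⟨g, hg1, hgS⟩
    obtain ⟨s0, hs0good⟩ := hgoodinf.nonempty
    obtain ⟨hs00, hs0unit⟩ := hgood s0 hs0good
    obtain ⟨g, hg1, hgS, hvDgS⟩ := key e s0 hs00 hs0unit
    have hvg : ((1 : K) ⊗ₜ[F] e) * g ∈ S := by
      have hmul2 := S.mul_mem hDS hvDgS
      have heq : D * (((1 : K) ⊗ₜ[F] e) * D * g)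
          = algebraMap F (K ⊗[F] E) a * (((1 : K) ⊗ₜ[F] e) * g) := by
        rw [show D * (((1 : K) ⊗ₜ[F] e) * D * g)
          = (D * D) * (((1 : K) ⊗ₜ[F] e) * g) by ring, hD2]
      rw [heq, ← Algebra.smul_def] at hmul2
      have := S.smul_mem hmul2 a⁻¹
      rwa [smul_smul, inv_mul_cancel₀ ha0, one_smul] at this
    have hfinal : ((1 : K) ⊗ₜ[F] e)
        = (((1 : K) ⊗ₜ[F] e) * g)
          * ((1 : K) ⊗ₜ[F] (e * e) - algebraMap F (K ⊗[F] E) (s0^2 * a)) := by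
      rw [show (((1 : K) ⊗ₜ[F] e) * g)
          * ((1 : K) ⊗ₜ[F] (e * e) - algebraMap F (K ⊗[F] E) (s0^2 * a))
        = ((1 : K) ⊗ₜ[F] e)
          * (((1 : K) ⊗ₜ[F] (e * e) - algebraMap F (K ⊗[F] E) (s0^2 * a)) * g) by ring,
        hg1, mul_one]
    rw [hfinal]
    exact S.mul_mem hvg (S.sub_mem hz (S.algebraMap_mem _))
  -- every element satisfies P
  have hall : ∀ x : K ⊗[F] E, x ∈ S := by
    intro x
    induction x using TensorProduct.induction_on with
    | zero => exact S.zero_mem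
    | tmul k e =>
      obtain ⟨α, β, hk⟩ := hspanK k
      have hdecomp : k ⊗ₜ[F] e
          = α • ((1 : K) ⊗ₜ[F] e) + β • (D * ((1 : K) ⊗ₜ[F] e)) := by
        calc k ⊗ₜ[F] e = (α • (1 : K) + β • δ) ⊗ₜ[F] e := by rw [← hk]
          _ = α • ((1 : K) ⊗ₜ[F] e) + β • (δ ⊗ₜ[F] e) := by
              rw [TensorProduct.add_tmul, TensorProduct.smul_tmul', TensorProduct.smul_tmul']
          _ = α • ((1 : K) ⊗ₜ[F] e) + β • (D * ((1 : K) ⊗ₜ[F] e)) := by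
              rw [hDdef, Algebra.TensorProduct.tmul_mul_tmul, mul_one, one_mul]
      rw [hdecomp]
      exact S.add_mem (S.smul_mem (hES e) α) (S.smul_mem (S.mul_mem hDS (hES e)) β)
    | add p q hp hq => exact S.add_mem hp hq
  -- conclusion
  intro x
  obtain ⟨t, ht⟩ := hall x
  exact ⟨t, ht, fun t' ht' => huniq t' t (ht'.trans ht.symm)⟩
end
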